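/- arXiv:1512.05444 — 6 statements merged into one kernel-verified Lean document; each statement's English description precedes it below -/
import Mathlib

section
/- Let z_1,…,z_n ∈ 𝔻 and B(z) = ∏_{j=1}^n (z − z_j)/(1 − conj(z_j)·z). Set B_1 = 1 and, for 2 ≤ k ≤ n, B_k(z) = ∏_{j=1}^{k−1} (z − z_j)/(1 − conj(z_j)·z). Then for every z ∈ ℂ with |z| ≠ 1 that is not a pole of B (i.e., z ≠ 1/conj(z_j) for all j), one has (1 − |B(z)|²)/(1 − |z|²) = Σ_{k=1}^n |B_k(z)|² · (1 − |z_k|²)/|1 − conj(z_k)·z|². -/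
open Complex ComplexConjugate

/-- Let `z₁, …, zₙ ∈ 𝔻` and `B(z) = ∏_{j=1}^n (z − z_j)/(1 − conj(z_j) z)`.  With
`B₁ = 1` and `B_k(z) = ∏_{j=1}^{k−1} (z − z_j)/(1 − conj(z_j) z)` for `2 ≤ k ≤ n`
(here indexed by `k : Fin n`, so `B_k` is the product over `j < k`), for every `z ∈ ℂ`
with `|z| ≠ 1` that is not a pole of `B` we have
`(1 − |B(z)|²)/(1 − |z|²) = Σ_{k=1}^n |B_k(z)|² (1 − |z_k|²)/|1 − conj(z_k) z|²`. -/
theorem blaschke_modulus_identity (n : ℕ) (z : Fin n → ℂ)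
    (hz : ∀ j, ‖z j‖ < 1)
    (B : ℂ → ℂ) (hB : ∀ w, B w = ∏ j, (w - z j) / (1 - conj (z j) * w))
    (Bk : Fin n → ℂ → ℂ)
    (hBk : ∀ k w, Bk k w =
      ∏ j ∈ Finset.univ.filter (fun j : Fin n => (j : ℕ) < (k : ℕ)),
        (w - z j) / (1 - conj (z j) * w))
    (w : ℂ) (hw : ‖w‖ ≠ 1) (hpole : ∀ j, 1 - conj (z j) * w ≠ 0) :
    (1 - ‖B w‖ ^ 2) / (1 - ‖w‖ ^ 2) =
      ∑ k, ‖Bk k w‖ ^ 2 *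
        ((1 - ‖z k‖ ^ 2) / ‖1 - conj (z k) * w‖ ^ 2) := by
  set f : Fin n → ℂ := fun j => (w - z j) / (1 - conj (z j) * w) with hf
  have habs : ∀ j, ‖f j‖ ^ 2 =
      ‖w - z j‖ ^ 2 / ‖1 - conj (z j) * w‖ ^ 2 := by
    intro j; simp [hf, map_div₀, div_pow]
  have key : ∀ j, ‖1 - conj (z j) * w‖ ^ 2 - ‖w - z j‖ ^ 2
      = (1 - ‖z j‖ ^ 2) * (1 - ‖w‖ ^ 2) := by
    intro j
    simp only [Complex.sq_norm, Complex.normSq_apply, Complex.sub_re, Complex.sub_im,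
      Complex.mul_re, Complex.mul_im, Complex.one_re, Complex.one_im,
      Complex.conj_re, Complex.conj_im]
    ring
  have hd : ∀ j, ‖1 - conj (z j) * w‖ ≠ 0 := fun j =>
    norm_ne_zero_iff.mpr (hpole j)
  have hw2 : (1 : ℝ) - ‖w‖ ^ 2 ≠ 0 := by
    intro h
    rcases lt_or_gt_of_ne hw with h' | h'
    · nlinarith [norm_nonneg w]
    · nlinarith
  set F : ℕ → ℝ := fun k =>
    ∏ j ∈ Finset.univ.filter (fun j : Fin n => (j : ℕ) < k), ‖f j‖ ^ 2 with hFdef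
  have hF0 : F 0 = 1 := by simp [hFdef]
  have hFn : F n = ‖B w‖ ^ 2 := by
    rw [hB, norm_prod, ← Finset.prod_pow]
    simp only [hFdef]
    rw [Finset.filter_true_of_mem (fun j _ => j.isLt)]
  have hBk2 : ∀ k : Fin n, ‖Bk k w‖ ^ 2 = F k := by
    intro k
    rw [hBk, norm_prod, ← Finset.prod_pow]
  have hstep : ∀ k : Fin n, F ((k : ℕ) + 1) = ‖f k‖ ^ 2 * F k := by
    intro k
    have hins : Finset.univ.filter (fun j : Fin n => (j : ℕ) < (k : ℕ) + 1)
        = insert k (Finset.univ.filter fun j : Fin n => (j : ℕ) < (k : ℕ)) := by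
      ext j
      simp [Fin.ext_iff]
      omega
    simp only [hFdef, hins]
    rw [Finset.prod_insert (by simp)]
  rw [div_eq_iff hw2, Finset.sum_mul]
  have htel : (1 : ℝ) - ‖B w‖ ^ 2 = ∑ i ∈ Finset.range n, (F i - F (i + 1)) := by
    rw [Finset.sum_range_sub' F, hF0, hFn]
  rw [htel, ← Fin.sum_univ_eq_sum_range (fun i => F i - F (i + 1)) n]
  refine Finset.sum_congr rfl fun k _ => ?_
  rw [hstep k, ← hBk2 k, habs k]
  have hk := key k
  have hdk := hd k
  generalize ‖1 - conj (z k) * w‖ = d at hk hdk ⊢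
  field_simp
  linear_combination ‖Bk k w‖ ^ 2 * hk
end

section
/- (Fatou) Let f be analytic on the open unit disk 𝔻 and suppose |f(z)| → 1 uniformly as |z| → 1, i.e., for every ε > 0 there exists r ∈ (0,1) such that ||f(z)| − 1| < ε whenever r < |z| < 1. Then f agrees on 𝔻 with a finite Blaschke product: there exist α ∈ ℝ, n ∈ ℕ, and z_1,…,z_n ∈ 𝔻 such that f(z) = e^{iα} ∏_{k=1}^n (z_k − z)/(1 − conj(z_k)·z) for all z ∈ 𝔻. -/
open Complex ComplexConjugate Metric Set Filter

lemma key_identity (a z : ℂ) :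
    Complex.normSq (1 - conj a * z) - Complex.normSq (a - z)
      = (1 - Complex.normSq a) * (1 - Complex.normSq z) := by
  have h : ((Complex.normSq (1 - conj a * z) - Complex.normSq (a - z) : ℝ) : ℂ)
      = ((1 - Complex.normSq a) * (1 - Complex.normSq z) : ℝ) := by
    push_cast
    rw [← Complex.mul_conj, ← Complex.mul_conj, ← Complex.mul_conj, ← Complex.mul_conj]
    simp only [map_sub, map_mul, map_one, Complex.conj_conj]
    ring
  exact_mod_cast h

lemma denom_ne (a z : ℂ) (ha : ‖a‖ < 1) (hz : ‖z‖ < 1) :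
    1 - conj a * z ≠ 0 := by
  intro h
  have h1 : conj a * z = 1 := by linear_combination -h
  have := congrArg norm h1
  rw [norm_mul, Complex.norm_conj, norm_one] at this
  nlinarith [norm_nonneg a, norm_nonneg z]

lemma abs_sub_le_denom (a z : ℂ) (ha : ‖a‖ < 1) (hz : ‖z‖ < 1) :
    ‖a - z‖ ≤ ‖1 - conj a * z‖ := by
  have h := key_identity a z
  rw [← Complex.sq_norm, ← Complex.sq_norm, ← Complex.sq_norm, ← Complex.sq_norm] at h
  rw [← pow_le_pow_iff_left₀ (norm_nonneg _) (norm_nonneg _) two_ne_zero]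
  have h1 : (0:ℝ) < 1 - ‖a‖ ^ 2 := by nlinarith [norm_nonneg a]
  have h2 : (0:ℝ) < 1 - ‖z‖ ^ 2 := by nlinarith [norm_nonneg z]
  nlinarith [mul_pos h1 h2]

set_option maxHeartbeats 1000000 in
lemma blaschke_near_one {a : ℂ} (ha : ‖a‖ < 1) {ε : ℝ} (hε : 0 < ε) :
    ∃ r : ℝ, 0 < r ∧ r < 1 ∧ ∀ z : ℂ, r < ‖z‖ → ‖z‖ < 1 →
      1 - ε < ‖a - z‖ / ‖1 - conj a * z‖ := by
  set δ : ℝ := min ε 1 / 2 with hδdef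
  have hδ0 : 0 < δ := by positivity
  have hδ1 : δ ≤ 1 / 2 := by
    rw [hδdef]; have := min_le_right ε 1; linarith
  have hδε0 : δ < ε := by
    rw [hδdef]; rcases le_or_gt ε 1 with h | h
    · rw [min_eq_left h]; linarith
    · rw [min_eq_right h.le]; linarith
  clear_value δ
  have hδε : δ < ε := hδε0
  refine ⟨max (1 - δ * (1 - ‖a‖) / 4) (‖a‖), ?_, ?_, ?_⟩
  · have h1 : (0:ℝ) < 1 - ‖a‖ := by linarith
    rcases le_or_gt (‖a‖) 0 with h | h
    · have : ‖a‖ = 0 := le_antisymm h (norm_nonneg a)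
      rw [this]
      refine lt_max_of_lt_left ?_
      nlinarith
    · exact lt_max_of_lt_right h
  · have h1 : (0:ℝ) < 1 - ‖a‖ := by linarith
    refine max_lt ?_ ha
    nlinarith
  · intro z hrz hz1
    have haz : ‖a‖ < ‖z‖ := lt_of_le_of_lt (le_max_right _ _) hrz
    have hz2 : 1 - δ * (1 - ‖a‖) / 4 < ‖z‖ :=
      lt_of_le_of_lt (le_max_left _ _) hrz
    set D := ‖1 - conj a * z‖ with hD
    set N := ‖a - z‖ with hN
    have hkey := key_identity a z
    rw [← Complex.sq_norm, ← Complex.sq_norm, ← Complex.sq_norm, ← Complex.sq_norm] at hkey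
    have hDlb : 1 - ‖a‖ ≤ D := by
      have h1 : ‖conj a * z‖ ≤ ‖a‖ := by
        rw [norm_mul, Complex.norm_conj]
        nlinarith [norm_nonneg a]
      calc 1 - ‖a‖ ≤ 1 - ‖conj a * z‖ := by linarith
        _ ≤ ‖1 - conj a * z‖ := by
            simpa using norm_sub_norm_le (1:ℂ) (conj a * z)
    have hD0 : 0 < D := by linarith
    rw [lt_div_iff₀ hD0]
    -- goal : (1 - ε) * D < N
    rcases le_or_gt ((1 - ε) * D) 0 with h | h
    · have hN0 : 0 < N := by
        rw [hN]
        have : a ≠ z := by intro h; rw [h] at haz; exact lt_irrefl _ haz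
        simpa [sub_ne_zero] using this
      linarith
    · have hε1 : ε < 1 := by nlinarith
      have hNnn : 0 ≤ N := norm_nonneg _
      set A := ‖a‖
      set Z := ‖z‖
      have hAnn : 0 ≤ A := norm_nonneg a
      have hZnn : 0 ≤ Z := norm_nonneg z
      have hA1 : (0:ℝ) < 1 - A := by linarith
      have hub : (1 - A ^ 2) * (1 - Z ^ 2) ≤ 4 * (1 - A) * (1 - Z) := by
        have f1 : (0:ℝ) ≤ (1 - A) * (1 - Z) := mul_nonneg (by linarith) (by linarith)
        have f2 : (1 + A) * (1 + Z) ≤ 4 := by nlinarith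
        calc (1 - A ^ 2) * (1 - Z ^ 2) = ((1 - A) * (1 - Z)) * ((1 + A) * (1 + Z)) := by ring
          _ ≤ ((1 - A) * (1 - Z)) * 4 := by nlinarith
          _ = 4 * (1 - A) * (1 - Z) := by ring
      have hzlb : 1 - Z < δ * (1 - A) / 4 := by linarith
      have s1 : 4 * (1 - A) * (1 - Z) < δ * (1 - A) ^ 2 := by
        nlinarith [mul_lt_mul_of_pos_left hzlb hA1]
      have s2 : δ * (1 - A) ^ 2 ≤ δ * D ^ 2 := by
        nlinarith [mul_self_le_mul_self hA1.le hDlb, hδ0]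
      have s3 : δ * D ^ 2 ≤ (2 * δ - δ ^ 2) * D ^ 2 := by
        nlinarith [mul_nonneg (mul_nonneg hδ0.le (by linarith : (0:ℝ) ≤ 1 - δ)) (sq_nonneg D)]
      have hsq : ((1 - δ) * D) ^ 2 < N ^ 2 := by nlinarith
      have h1δ : (0:ℝ) < 1 - δ := by linarith
      have hlt : (1 - δ) * D < N := by
        have := (pow_lt_pow_iff_left₀ (mul_nonneg h1δ.le hD0.le) hNnn two_ne_zero).mp hsq
        exact this
      nlinarith [mul_pos hD0 (show (0:ℝ) < ε - δ by linarith)]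

lemma abs_le_one_of_small_near_boundary (f : ℂ → ℂ)
    (hf : DifferentiableOn ℂ f (Metric.ball (0 : ℂ) 1))
    (h : ∀ ε > (0:ℝ), ∃ r : ℝ, 0 < r ∧ r < 1 ∧
      ∀ z : ℂ, r < ‖z‖ → ‖z‖ < 1 → ‖f z‖ < 1 + ε) :
    ∀ w : ℂ, ‖w‖ < 1 → ‖f w‖ ≤ 1 := by
  intro w hw
  refine le_of_forall_pos_le_add fun ε hε => ?_
  obtain ⟨r, hr0, hr1, hr⟩ := h ε hε
  set ρ : ℝ := (max r (‖w‖) + 1) / 2 with hρdef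
  have hm1 : max r (‖w‖) < 1 := max_lt hr1 hw
  have hmnn : 0 ≤ max r (‖w‖) := le_trans hr0.le (le_max_left _ _)
  have hρ0 : 0 < ρ := by rw [hρdef]; linarith
  have hρ1 : ρ < 1 := by rw [hρdef]; linarith
  have hρm : max r (‖w‖) < ρ := by rw [hρdef]; linarith
  have hsub : Metric.closedBall (0:ℂ) ρ ⊆ Metric.ball (0:ℂ) 1 := by
    intro x hx
    rw [Metric.mem_closedBall] at hx
    rw [Metric.mem_ball]
    linarith
  have hcl : closure (Metric.ball (0:ℂ) ρ) = Metric.closedBall (0:ℂ) ρ :=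
    closure_ball 0 (ne_of_gt hρ0)
  have hd : DiffContOnCl ℂ f (Metric.ball (0:ℂ) ρ) := by
    refine ⟨hf.mono (Metric.ball_subset_ball hρ1.le), ?_⟩
    rw [hcl]
    exact hf.continuousOn.mono hsub
  have hfr : ∀ z ∈ frontier (Metric.ball (0:ℂ) ρ), ‖f z‖ ≤ 1 + ε := by
    intro z hz
    rw [frontier_ball 0 (ne_of_gt hρ0)] at hz
    have hz' : ‖z‖ = ρ := by
      simpa using (mem_sphere_zero_iff_norm.mp hz)
    have := hr z (by rw [hz']; exact lt_of_le_of_lt (le_max_left _ _) hρm)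
      (by rw [hz']; exact hρ1)
    linarith
  have hwcl : w ∈ closure (Metric.ball (0:ℂ) ρ) := by
    rw [hcl, Metric.mem_closedBall]
    simp only [dist_zero_right]
    exact le_of_lt (lt_of_le_of_lt (le_max_right _ _) hρm)
  have := Complex.norm_le_of_forall_mem_frontier_norm_le Metric.isBounded_ball hd hfr hwcl
  exact this

lemma const_of_no_zeros (f : ℂ → ℂ)
    (hf : DifferentiableOn ℂ f (Metric.ball (0 : ℂ) 1))
    (hlim : ∀ ε > (0 : ℝ), ∃ r : ℝ, 0 < r ∧ r < 1 ∧
      ∀ z : ℂ, r < ‖z‖ → ‖z‖ < 1 → |‖f z‖ - 1| < ε)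
    (hz : ∀ z : ℂ, ‖z‖ < 1 → f z ≠ 0) :
    ∃ α : ℝ, ∀ w : ℂ, ‖w‖ < 1 → f w = Complex.exp (α * Complex.I) := by
  have hub : ∀ w : ℂ, ‖w‖ < 1 → ‖f w‖ ≤ 1 := by
    apply abs_le_one_of_small_near_boundary f hf
    intro ε hε
    obtain ⟨r, h0, h1, hr⟩ := hlim ε hε
    exact ⟨r, h0, h1, fun z hz1 hz2 => by
      have := hr z hz1 hz2
      have := abs_lt.mp this
      linarith [this.2]⟩
  have hfinv : DifferentiableOn ℂ (fun z => (f z)⁻¹) (Metric.ball (0:ℂ) 1) := by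
    apply hf.inv
    intro x hx
    exact hz x (by simpa using mem_ball_zero_iff.mp hx)
  have hlb : ∀ w : ℂ, ‖w‖ < 1 → ‖(f w)⁻¹‖ ≤ 1 := by
    apply abs_le_one_of_small_near_boundary _ hfinv
    intro ε hε
    set t : ℝ := min (1/2) (ε/2) with htdef
    have ht0 : 0 < t := by positivity
    have ht2 : t ≤ 1/2 := min_le_left _ _
    have htε : 2 * t ≤ ε := by
      have := min_le_right (1/2 : ℝ) (ε/2); rw [htdef]; linarith
    obtain ⟨r, h0, h1, hr⟩ := hlim t ht0
    refine ⟨r, h0, h1, fun z hz1 hz2 => ?_⟩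
    have h3 := abs_lt.mp (hr z hz1 hz2)
    have h4 : 1 - t < ‖f z‖ := by linarith [h3.1]
    have h5 : (0:ℝ) < 1 - t := by linarith
    rw [norm_inv]
    have h6 : (‖f z‖)⁻¹ < (1 - t)⁻¹ := by
      apply inv_strictAnti₀ h5 h4
    have h7 : (1 - t)⁻¹ ≤ 1 + 2 * t := by
      have hq : (1:ℝ) ≤ (1 + 2*t) * (1-t) := by nlinarith
      calc (1-t)⁻¹ = 1 * (1-t)⁻¹ := (one_mul _).symm
        _ ≤ ((1+2*t)*(1-t)) * (1-t)⁻¹ := by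
            apply mul_le_mul_of_nonneg_right hq (by positivity)
        _ = (1+2*t) * ((1-t)*(1-t)⁻¹) := by ring
        _ = 1+2*t := by rw [mul_inv_cancel₀ (ne_of_gt h5), mul_one]
    linarith
  have habs1 : ∀ w : ℂ, ‖w‖ < 1 → ‖f w‖ = 1 := by
    intro w hw
    have h1 := hub w hw
    have h2 := hlb w hw
    rw [norm_inv] at h2
    have h3 : 0 < ‖f w‖ := by
      rw [norm_pos_iff]; exact hz w hw
    have := mul_le_mul_of_nonneg_left h2 h3.le
    rw [mul_inv_cancel₀ (ne_of_gt h3), mul_one] at this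
    linarith
  have hmax : IsMaxOn (norm ∘ f) (Metric.ball (0:ℂ) 1) 0 := by
    intro x hx
    simp only [Function.comp_apply, Set.mem_setOf_eq]
    rw [habs1 x (by simpa using mem_ball_zero_iff.mp hx),
      habs1 0 (by simp)]
  have heq := Complex.eqOn_of_isPreconnected_of_isMaxOn_norm
    (convex_ball (0:ℂ) 1).isPreconnected Metric.isOpen_ball hf
    (by simp : (0:ℂ) ∈ Metric.ball (0:ℂ) 1) hmax
  refine ⟨Complex.arg (f 0), fun w hw => ?_⟩
  have h1 : f w = f 0 := heq (mem_ball_zero_iff.mpr (by assumption))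
  rw [h1]
  conv_lhs => rw [← Complex.norm_mul_exp_arg_mul_I (f 0)]
  rw [habs1 0 (by simp)]
  simp

open Classical in
noncomputable def ordN (f : ℂ → ℂ) (a : ℂ) : ℕ :=
  if h : AnalyticAt ℂ f a then (analyticOrderAt f a).toNat else 0

lemma ordN_witness {f : ℂ → ℂ} {a : ℂ} (hA : AnalyticAt ℂ f a)
    (hne : ¬ ∀ᶠ z in nhds a, f z = 0) :
    ∃ h : ℂ → ℂ, AnalyticAt ℂ h a ∧ h a ≠ 0 ∧
      ∀ᶠ z in nhds a, f z = (z - a) ^ (ordN f a) * h z := by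
  have hT : analyticOrderAt f a ≠ ⊤ := fun hTop => hne (analyticOrderAt_eq_top.mp hTop)
  have hco : analyticOrderAt f a = (ordN f a : ℕ∞) := by
    rw [ordN, dif_pos hA, ENat.natCast_toNat hT]
  obtain ⟨h, h1, h2, h3⟩ := (hA.analyticOrderAt_eq_natCast (n := ordN f a)).mp hco
  exact ⟨h, h1, h2, by simpa [smul_eq_mul] using h3⟩

lemma ordN_eq_of_witness {f h : ℂ → ℂ} {a : ℂ} {n : ℕ} (h1 : AnalyticAt ℂ h a)
    (h2 : h a ≠ 0) (h3 : ∀ᶠ z in nhds a, f z = (z - a) ^ n * h z)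
    (hA : AnalyticAt ℂ f a) : ordN f a = n := by
  have : analyticOrderAt f a = (n : ℕ∞) := by
    rw [hA.analyticOrderAt_eq_natCast]
    exact ⟨h, h1, h2, by simpa [smul_eq_mul] using h3⟩
  rw [ordN, dif_pos hA, this, ENat.toNat_coe]

lemma ordN_pos_of_zero {f : ℂ → ℂ} {a : ℂ} (hA : AnalyticAt ℂ f a) (hfa : f a = 0)
    (hne : ¬ ∀ᶠ z in nhds a, f z = 0) : 1 ≤ ordN f a := by
  obtain ⟨h, h1, h2, h3⟩ := ordN_witness hA hne
  rcases Nat.eq_zero_or_pos (ordN f a) with h0 | h0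
  · exfalso
    have := h3.self_of_nhds
    rw [h0, pow_zero, one_mul, hfa] at this
    exact h2 this.symm
  · exact h0

lemma grel {f : ℂ → ℂ} {a : ℂ} (ha : ‖a‖ < 1) (hfa : f a = 0) :
    ∀ z : ℂ, ‖z‖ < 1 →
      f z = (a - z) / (1 - conj a * z) * ((conj a * z - 1) * dslope f a z) := by
  intro z hz
  rcases eq_or_ne z a with rfl | hza
  · rw [hfa, sub_self, zero_div, zero_mul]
  · rw [dslope_of_ne f hza, slope_def_field, hfa, sub_zero]
    have h1 : 1 - conj a * z ≠ 0 := denom_ne a z ha hz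
    have h2 : z - a ≠ 0 := sub_ne_zero.mpr hza
    have h1' : 1 - z * conj a ≠ 0 := by rwa [mul_comm]
    field_simp
    ring

lemma gdiff {f : ℂ → ℂ} {a : ℂ} (ha : ‖a‖ < 1)
    (hf : DifferentiableOn ℂ f (Metric.ball (0 : ℂ) 1)) :
    DifferentiableOn ℂ (fun z => (conj a * z - 1) * dslope f a z) (Metric.ball (0 : ℂ) 1) := by
  have hmem : Metric.ball (0:ℂ) 1 ∈ nhds a :=
    Metric.isOpen_ball.mem_nhds (mem_ball_zero_iff.mpr (by assumption))
  exact ((differentiableOn_const _).mul differentiableOn_id |>.sub (differentiableOn_const _)).mul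
    ((differentiableOn_dslope hmem).mpr hf)

lemma ordN_g_at_other {f : ℂ → ℂ} {a b : ℂ} (ha : ‖a‖ < 1) (hb : ‖b‖ < 1)
    (hba : b ≠ a) (hfa : f a = 0)
    (hf : DifferentiableOn ℂ f (Metric.ball (0 : ℂ) 1))
    (hneb : ¬ ∀ᶠ z in nhds b, f z = 0) :
    ordN (fun z => (conj a * z - 1) * dslope f a z) b = ordN f b := by
  have hAf : AnalyticAt ℂ f b :=
    (hf.analyticOnNhd Metric.isOpen_ball) b (mem_ball_zero_iff.mpr (by assumption))
  obtain ⟨h, hh, hhb, hev⟩ := ordN_witness hAf hneb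
  have hAg : AnalyticAt ℂ (fun z => (conj a * z - 1) * dslope f a z) b :=
    ((gdiff ha hf).analyticOnNhd Metric.isOpen_ball) b
      (mem_ball_zero_iff.mpr (by assumption))
  have hsub : b - a ≠ 0 := sub_ne_zero.mpr hba
  have hφa : AnalyticAt ℂ (fun z => (conj a * z - 1) * (z - a)⁻¹ * h z) b := by
    exact (((analyticAt_const.mul analyticAt_id).sub analyticAt_const).mul
      ((analyticAt_id.sub analyticAt_const).inv hsub)).mul hh
  have hφb : (conj a * b - 1) * (b - a)⁻¹ * h b ≠ 0 := by
    have h1 : conj a * b - 1 ≠ 0 := by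
      intro hcon
      exact denom_ne a b ha hb (by linear_combination -hcon)
    exact mul_ne_zero (mul_ne_zero h1 (inv_ne_zero hsub)) hhb
  refine ordN_eq_of_witness hφa hφb ?_ hAg
  filter_upwards [hev, eventually_ne_nhds hba] with z hz hza
  rw [dslope_of_ne f hza, slope_def_field, hfa, sub_zero, hz]
  have h2 : z - a ≠ 0 := sub_ne_zero.mpr hza
  field_simp

lemma ordN_g_at_a {f : ℂ → ℂ} {a : ℂ} (ha : ‖a‖ < 1) (hfa : f a = 0)
    (hf : DifferentiableOn ℂ f (Metric.ball (0 : ℂ) 1))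
    (hnea : ¬ ∀ᶠ z in nhds a, f z = 0) :
    ordN (fun z => (conj a * z - 1) * dslope f a z) a = ordN f a - 1 := by
  have hmem : a ∈ Metric.ball (0:ℂ) 1 := mem_ball_zero_iff.mpr (by assumption)
  have hAf : AnalyticAt ℂ f a := (hf.analyticOnNhd Metric.isOpen_ball) a hmem
  obtain ⟨h, hh, hha, hev⟩ := ordN_witness hAf hnea
  set n := ordN f a with hn
  have hn1 : 1 ≤ n := ordN_pos_of_zero hAf hfa hnea
  set g := fun z => (conj a * z - 1) * dslope f a z with hg
  set φ := fun z => (z - a) ^ (n - 1) * ((conj a * z - 1) * h z) with hφ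
  have hAg : AnalyticAt ℂ g a := ((gdiff ha hf).analyticOnNhd Metric.isOpen_ball) a hmem
  -- pointwise equality off a
  have hpunct : ∀ᶠ z in nhds a, z ≠ a → g z = φ z := by
    filter_upwards [hev] with z hz hza
    have h2 : z - a ≠ 0 := sub_ne_zero.mpr hza
    rw [hg, hφ]
    simp only
    rw [dslope_of_ne f hza, slope_def_field, hfa, sub_zero, hz]
    have hpow : (z - a) ^ n = (z - a) ^ (n - 1) * (z - a) := by
      conv_lhs => rw [show n = (n - 1) + 1 by omega]
      rw [pow_succ]
    rw [hpow]
    field_simp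
  -- equality at a via continuity
  have hgc : ContinuousAt g a :=
    ((gdiff ha hf).continuousOn.continuousAt (Metric.isOpen_ball.mem_nhds hmem))
  have hφc : ContinuousAt φ a := by
    apply ContinuousAt.mul
    · exact ((continuous_id.sub continuous_const).pow _).continuousAt
    · exact ((continuous_const.mul continuous_id).sub continuous_const).continuousAt.mul
        hh.continuousAt
  have hp' : ∀ᶠ z in nhdsWithin a {a}ᶜ, g z = φ z := by
    filter_upwards [eventually_mem_nhdsWithin, hpunct.filter_mono nhdsWithin_le_nhds] with z h1 h2
    exact h2 h1
  have hat : g a = φ a := by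
    have t1 : Filter.Tendsto g (nhdsWithin a {a}ᶜ) (nhds (g a)) :=
      hgc.continuousWithinAt.tendsto
    have t2 : Filter.Tendsto φ (nhdsWithin a {a}ᶜ) (nhds (φ a)) :=
      hφc.continuousWithinAt.tendsto
    exact tendsto_nhds_unique (t1.congr' hp') t2
  have hevg : ∀ᶠ z in nhds a, g z = φ z := by
    filter_upwards [hpunct] with z hz
    rcases eq_or_ne z a with rfl | hza
    · exact hat
    · exact hz hza
  have hψa : AnalyticAt ℂ (fun z => (conj a * z - 1) * h z) a :=
    ((analyticAt_const.mul analyticAt_id).sub analyticAt_const).mul hh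
  have hψne : (conj a * a - 1) * h a ≠ 0 := by
    have h1 : conj a * a - 1 ≠ 0 := by
      intro hcon
      exact denom_ne a a ha ha (by linear_combination -hcon)
    exact mul_ne_zero h1 hha
  exact ordN_eq_of_witness hψa hψne (by filter_upwards [hevg] with z hz; exact hz) hAg

lemma hlim_transfer {f g : ℂ → ℂ} {a : ℂ} (ha : ‖a‖ < 1)
    (hrel : ∀ z : ℂ, ‖z‖ < 1 → f z = (a - z) / (1 - conj a * z) * g z)
    (hlim : ∀ ε > (0 : ℝ), ∃ r : ℝ, 0 < r ∧ r < 1 ∧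
      ∀ z : ℂ, r < ‖z‖ → ‖z‖ < 1 → |‖f z‖ - 1| < ε) :
    ∀ ε > (0 : ℝ), ∃ r : ℝ, 0 < r ∧ r < 1 ∧
      ∀ z : ℂ, r < ‖z‖ → ‖z‖ < 1 → |‖g z‖ - 1| < ε := by
  intro ε hε
  set t : ℝ := min ε 1 / 4 with htdef
  have ht0 : 0 < t := by positivity
  have ht4 : t ≤ 1 / 4 := by
    have := min_le_right ε 1; rw [htdef]; linarith
  have htε : t ≤ ε / 4 := by
    have := min_le_left ε 1; rw [htdef]; linarith
  have htkey : t * (2 + ε) < ε := by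
    rcases le_or_gt ε 1 with h | h
    · rw [htdef, min_eq_left h]; nlinarith
    · rw [htdef, min_eq_right h.le]; nlinarith
  obtain ⟨r₁, hr₁0, hr₁1, hr₁⟩ := hlim t ht0
  obtain ⟨r₂, hr₂0, hr₂1, hr₂⟩ := blaschke_near_one ha ht0
  refine ⟨max r₁ r₂, lt_of_lt_of_le hr₁0 (le_max_left _ _), max_lt hr₁1 hr₂1, ?_⟩
  intro z hrz hz1
  have hz₁ : r₁ < ‖z‖ := lt_of_le_of_lt (le_max_left _ _) hrz
  have hz₂ : r₂ < ‖z‖ := lt_of_le_of_lt (le_max_right _ _) hrz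
  have hF := abs_lt.mp (hr₁ z hz₁ hz1)
  have hB := hr₂ z hz₂ hz1
  have hDne : (1 : ℂ) - conj a * z ≠ 0 := denom_ne a z ha hz1
  set B : ℝ := ‖a - z‖ / ‖1 - conj a * z‖ with hBdef
  have hD0 : 0 < ‖1 - conj a * z‖ := by
    rw [norm_pos_iff]; exact hDne
  have hB1 : B ≤ 1 := by
    rw [hBdef, div_le_one hD0]
    exact abs_sub_le_denom a z ha hz1
  have hFBG : ‖f z‖ = B * ‖g z‖ := by
    rw [hrel z hz1, norm_mul, norm_div, hBdef]
  set G : ℝ := ‖g z‖ with hGdef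
  have hGnn : 0 ≤ G := norm_nonneg _
  have hBt : 1 - t < B := hB
  rw [abs_lt]
  constructor
  · -- G > 1 - ε : G ≥ F = B G ≥ ... since B ≤ 1, G ≥ F
    have hFG : ‖f z‖ ≤ G := by
      rw [hFBG]
      nlinarith
    have : 1 - t < ‖f z‖ := by linarith [hF.1]
    nlinarith
  · -- G < 1 + ε
    have h1 : (1 - t) * G < ‖f z‖ := by
      rw [hFBG]
      nlinarith
    have h2 : ‖f z‖ < 1 + t := by linarith [hF.2]
    nlinarith

lemma exists_ne_zero {f : ℂ → ℂ}
    (hlim : ∀ ε > (0 : ℝ), ∃ r : ℝ, 0 < r ∧ r < 1 ∧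
      ∀ z : ℂ, r < ‖z‖ → ‖z‖ < 1 → |‖f z‖ - 1| < ε) :
    ∃ w : ℂ, ‖w‖ < 1 ∧ f w ≠ 0 := by
  obtain ⟨r, hr0, hr1, hr⟩ := hlim (1/2) (by norm_num)
  refine ⟨((r+1)/2 : ℝ), ?_, ?_⟩
  · rw [Complex.norm_real, Real.norm_eq_abs, abs_of_pos (by linarith)]; linarith
  · have h1 : ‖(((r+1)/2 : ℝ) : ℂ)‖ = (r+1)/2 := by
      rw [Complex.norm_real, Real.norm_eq_abs, abs_of_pos (by linarith)]
    have := hr _ (by rw [h1]; linarith) (by rw [h1]; linarith)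
    intro hcon
    rw [hcon] at this
    simp at this
    linarith

lemma not_eventually_zero {f : ℂ → ℂ}
    (hf : DifferentiableOn ℂ f (Metric.ball (0 : ℂ) 1))
    (hlim : ∀ ε > (0 : ℝ), ∃ r : ℝ, 0 < r ∧ r < 1 ∧
      ∀ z : ℂ, r < ‖z‖ → ‖z‖ < 1 → |‖f z‖ - 1| < ε)
    {x : ℂ} (hx : ‖x‖ < 1) (hfreq : ∃ᶠ z in nhdsWithin x {x}ᶜ, f z = 0) : False := by
  have hAnal := hf.analyticOnNhd Metric.isOpen_ball
  have heq := hAnal.eqOn_zero_of_preconnected_of_frequently_eq_zero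
    (convex_ball (0:ℂ) 1).isPreconnected
    (mem_ball_zero_iff.mpr (by assumption)) hfreq
  obtain ⟨w, hw1, hw2⟩ := exists_ne_zero hlim
  exact hw2 (heq (mem_ball_zero_iff.mpr (by assumption)))

lemma key_induction (N : ℕ) : ∀ (f : ℂ → ℂ) (S : Finset ℂ),
    DifferentiableOn ℂ f (Metric.ball (0 : ℂ) 1) →
    (∀ ε > (0 : ℝ), ∃ r : ℝ, 0 < r ∧ r < 1 ∧
      ∀ z : ℂ, r < ‖z‖ → ‖z‖ < 1 → |‖f z‖ - 1| < ε) →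
    (∀ b ∈ S, ‖b‖ < 1) →
    (∀ z : ℂ, ‖z‖ < 1 → f z = 0 → z ∈ S) →
    (∑ b ∈ S, ordN f b ≤ N) →
    ∃ (α : ℝ) (n : ℕ) (z : Fin n → ℂ), (∀ k, ‖z k‖ < 1) ∧
      ∀ w : ℂ, ‖w‖ < 1 →
        f w = Complex.exp (α * Complex.I) * ∏ k, (z k - w) / (1 - conj (z k) * w) := by
  induction N with
  | zero =>
    intro f S hf hlim hS1 hS2 hsum
    have hzero : ∀ z : ℂ, ‖z‖ < 1 → f z ≠ 0 := by
      intro z hz hcon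
      have hzS := hS2 z hz hcon
      have hA : AnalyticAt ℂ f z :=
        (hf.analyticOnNhd Metric.isOpen_ball) z (mem_ball_zero_iff.mpr (by assumption))
      have hne : ¬ ∀ᶠ w in nhds z, f w = 0 := by
        intro hev
        exact not_eventually_zero hf hlim hz ((hev.filter_mono nhdsWithin_le_nhds).frequently)
      have h1 := ordN_pos_of_zero hA hcon hne
      have h2 : ordN f z ≤ ∑ b ∈ S, ordN f b :=
        Finset.single_le_sum (fun b _ => Nat.zero_le _) hzS
      omega
    obtain ⟨α, hα⟩ := const_of_no_zeros f hf hlim hzero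
    exact ⟨α, 0, Fin.elim0, fun k => k.elim0, fun w hw => by simp [hα w hw]⟩
  | succ M IH =>
    intro f S hf hlim hS1 hS2 hsum
    by_cases hzero : ∀ z : ℂ, ‖z‖ < 1 → f z ≠ 0
    · obtain ⟨α, hα⟩ := const_of_no_zeros f hf hlim hzero
      exact ⟨α, 0, Fin.elim0, fun k => k.elim0, fun w hw => by simp [hα w hw]⟩
    · push_neg at hzero
      obtain ⟨a, ha1, hfa⟩ := hzero
      have hnev : ∀ x : ℂ, ‖x‖ < 1 → ¬ ∀ᶠ z in nhds x, f z = 0 := by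
        intro x hx hev
        exact not_eventually_zero hf hlim hx ((hev.filter_mono nhdsWithin_le_nhds).frequently)
      set g := fun z => (conj a * z - 1) * dslope f a z with hgdef
      have hg : DifferentiableOn ℂ g (Metric.ball (0:ℂ) 1) := gdiff ha1 hf
      have hrel := grel ha1 hfa
      have hglim := hlim_transfer ha1 hrel hlim
      have hSg : ∀ z : ℂ, ‖z‖ < 1 → g z = 0 → z ∈ S := by
        intro z hz hgz
        have hgz' : (conj a * z - 1) * dslope f a z = 0 := hgz
        exact hS2 z hz (by rw [hrel z hz, hgz', mul_zero])
      have haS : a ∈ S := hS2 a ha1 hfa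
      have hAfa : AnalyticAt ℂ f a :=
        (hf.analyticOnNhd Metric.isOpen_ball) a (mem_ball_zero_iff.mpr (by assumption))
      have hord_a : ordN g a = ordN f a - 1 := ordN_g_at_a ha1 hfa hf (hnev a ha1)
      have hord_pos : 1 ≤ ordN f a := ordN_pos_of_zero hAfa hfa (hnev a ha1)
      have hsum_g : ∑ b ∈ S, ordN g b ≤ M := by
        have he1 : ∑ b ∈ S.erase a, ordN g b = ∑ b ∈ S.erase a, ordN f b := by
          apply Finset.sum_congr rfl
          intro b hb
          have hba : b ≠ a := Finset.ne_of_mem_erase hb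
          exact ordN_g_at_other ha1 (hS1 b (Finset.mem_of_mem_erase hb)) hba hfa hf
            (hnev b (hS1 b (Finset.mem_of_mem_erase hb)))
        have he2 := Finset.add_sum_erase S (ordN g) haS
        have he3 := Finset.add_sum_erase S (ordN f) haS
        omega
      obtain ⟨α, n, zs, hzs, hrep⟩ := IH g S hg hglim hS1 hSg hsum_g
      refine ⟨α, n + 1, Fin.cons a zs, ?_, ?_⟩
      · intro k
        refine Fin.cases ?_ ?_ k
        · simpa using ha1
        · intro i; simpa using hzs i
      · intro w hw
        have hrep' : (conj a * w - 1) * dslope f a w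
            = Complex.exp (α * Complex.I) * ∏ k, (zs k - w) / (1 - conj (zs k) * w) :=
          hrep w hw
        rw [hrel w hw, hrep', Fin.prod_univ_succ]
        simp only [Fin.cons_zero, Fin.cons_succ]
        ring

/-- **Fatou.**  If `f` is analytic on the open unit disk `𝔻` and `|f(z)| → 1`
uniformly as `|z| → 1`, then `f` agrees on `𝔻` with a finite Blaschke product:
there are `α ∈ ℝ`, `n ∈ ℕ` and `z₁, …, zₙ ∈ 𝔻` with
`f(z) = e^{iα} ∏_{k=1}^n (z_k − z)/(1 − conj(z_k) z)` for all `z ∈ 𝔻`. -/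
theorem fatou_finite_blaschke (f : ℂ → ℂ)
    (hf : DifferentiableOn ℂ f (Metric.ball (0 : ℂ) 1))
    (hlim : ∀ ε > (0 : ℝ), ∃ r : ℝ, 0 < r ∧ r < 1 ∧
      ∀ z : ℂ, r < ‖z‖ → ‖z‖ < 1 → |‖f z‖ - 1| < ε) :
    ∃ (α : ℝ) (n : ℕ) (z : Fin n → ℂ), (∀ k, ‖z k‖ < 1) ∧
      ∀ w : ℂ, ‖w‖ < 1 →
        f w = Complex.exp (α * Complex.I) * ∏ k, (z k - w) / (1 - conj (z k) * w) := by
  obtain ⟨r₀, hr₀0, hr₀1, hr₀⟩ := hlim (1/2) (by norm_num)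
  set Z : Set ℂ := {z : ℂ | ‖z‖ < 1 ∧ f z = 0} with hZdef
  have hsub : Z ⊆ Metric.closedBall (0:ℂ) r₀ := by
    intro z hz
    rw [Metric.mem_closedBall, dist_zero_right]
    by_contra hcon
    push_neg at hcon
    have := hr₀ z hcon hz.1
    rw [hz.2] at this
    simp at this
    linarith
  have hfin : Z.Finite := by
    by_contra hinf
    rw [← Set.Infinite] at hinf
    obtain ⟨x, hxK, hacc⟩ := hinf.exists_accPt_of_subset_isCompact
      (isCompact_closedBall (0:ℂ) r₀) hsub
    have hx1 : ‖x‖ < 1 := by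
      rw [Metric.mem_closedBall, dist_zero_right] at hxK
      linarith
    have hfreq : ∃ᶠ z in nhdsWithin x {x}ᶜ, f z = 0 := by
      have h := accPt_iff_frequently.mp hacc
      rw [frequently_nhdsWithin_iff]
      exact h.mono fun z hz => ⟨hz.2.2, hz.1⟩
    exact not_eventually_zero hf hlim hx1 hfreq
  refine key_induction (∑ b ∈ hfin.toFinset, ordN f b) f hfin.toFinset hf hlim ?_ ?_ le_rfl
  · intro b hb
    exact ((Set.Finite.mem_toFinset hfin).mp hb).1
  · intro z hz hfz
    exact (Set.Finite.mem_toFinset hfin).mpr ⟨hz, hfz⟩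
end

section
/- (Fisher) Let f be continuous on the closed unit disk, analytic on 𝔻, with |f(z)| ≤ 1 for all |z| ≤ 1, and let ε > 0. Then there exist finitely many finite Blaschke products B_1,…,B_m and nonnegative reals λ_1,…,λ_m with λ_1 + ⋯ + λ_m = 1 such that sup_{|z| ≤ 1} |f(z) − Σ_{j=1}^m λ_j B_j(z)| < ε. -/
open Complex ComplexConjugate

open Polynomial Finset in
private lemma fisher_maxmod {g : ℂ → ℂ} (hg : Differentiable ℂ g) {ρ : ℝ}
    (hb : ∀ z : ℂ, ‖z‖ = 1 → ‖g z‖ ≤ ρ) :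
    ∀ z : ℂ, ‖z‖ ≤ 1 → ‖g z‖ ≤ ρ := by
  intro z hz
  have h1 : z ∈ closure (Metric.ball (0:ℂ) 1) := by
    rw [closure_ball (0:ℂ) one_ne_zero]
    simpa [Metric.mem_closedBall, Complex.dist_eq] using hz
  have h2 : ∀ w ∈ frontier (Metric.ball (0:ℂ) 1), ‖g w‖ ≤ ρ := by
    intro w hw
    rw [frontier_ball (0:ℂ) one_ne_zero] at hw
    simp only [mem_sphere_iff_norm, sub_zero] at hw
    exact hb w (by simpa [Complex.norm_def] using hw)
  simpa using Complex.norm_le_of_forall_mem_frontier_norm_le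
    Metric.isBounded_ball (hg.diffContOnCl) h2 h1

open Polynomial Finset in
private lemma fisher_rootsum (m : ℕ) (hm : 0 < m) (k : ℕ) :
    ∑ j ∈ range m, (Complex.exp (2 * Real.pi * Complex.I / m)) ^ (j * k)
      = if m ∣ k then (m : ℂ) else 0 := by
  set ζ : ℂ := Complex.exp (2 * Real.pi * Complex.I / m) with hζ
  have hζm : ζ ^ m = 1 := by
    rw [hζ, ← Complex.exp_nat_mul]
    rw [mul_div_cancel₀ _ (by exact_mod_cast hm.ne' : (m:ℂ) ≠ 0)]
    exact Complex.exp_two_pi_mul_I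
  have key : ∀ j, ζ ^ (j * k) = (ζ ^ k) ^ j := fun j => by
    rw [← pow_mul, Nat.mul_comm]
  simp_rw [key]
  by_cases hdvd : m ∣ k
  · obtain ⟨t, rfl⟩ := hdvd
    have : ζ ^ (m * t) = 1 := by rw [pow_mul, hζm, one_pow]
    simp [this]
  · rw [if_neg hdvd]
    have hne : ζ ^ k ≠ 1 := by
      intro h
      rw [hζ, ← Complex.exp_nat_mul, Complex.exp_eq_one_iff] at h
      obtain ⟨t, ht⟩ := h
      have hπ : (Real.pi : ℂ) ≠ 0 := by exact_mod_cast Real.pi_ne_zero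
      have hI : Complex.I ≠ 0 := Complex.I_ne_zero
      have hmc : (m : ℂ) ≠ 0 := by exact_mod_cast hm.ne'
      have hkc : (k : ℂ) = t * m := by
        have h2 : (2 * (Real.pi:ℝ) * Complex.I) ≠ 0 := by
          simp [hπ, hI]
        field_simp at ht
        have ht' : (k:ℂ) * (2 * (Real.pi:ℂ) * Complex.I)
            = (t * m) * (2 * (Real.pi:ℂ) * Complex.I) := by
          rw [ht]; ring
        exact mul_right_cancel₀ (by simp [hπ, hI]) ht'
      have hkz : (k : ℤ) = t * m := by exact_mod_cast hkc
      exact hdvd (Int.natCast_dvd_natCast.mp ⟨t, by linarith⟩)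
    rw [geom_sum_eq hne]
    have : (ζ ^ k) ^ m = 1 := by rw [← pow_mul, mul_comm, pow_mul, hζm, one_pow]
    simp [this]

open Polynomial Finset in
private lemma fisher_sumident (m : ℕ) (hm : 0 < m) (p w h : ℂ) (hh : ‖h‖ < 1) :
    ∑ j ∈ range m,
        (p + Complex.exp (2 * Real.pi * Complex.I / m) ^ j * w)
          / (1 + Complex.exp (2 * Real.pi * Complex.I / m) ^ j * h)
      = m * (p + w * (-h) ^ (m - 1)) / (1 - (-h) ^ m) := by
  set ζ : ℂ := Complex.exp (2 * Real.pi * Complex.I / m) with hζ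
  have hζm : ζ ^ m = 1 := by
    rw [hζ, ← Complex.exp_nat_mul]
    rw [mul_div_cancel₀ _ (by exact_mod_cast hm.ne' : (m:ℂ) ≠ 0)]
    exact Complex.exp_two_pi_mul_I
  have habsζ : ‖ζ‖ = 1 := by
    rw [hζ, Complex.norm_exp]
    norm_num [Complex.div_re]
  have habsh : ∀ j : ℕ, ‖ζ ^ j * h‖ < 1 := by
    intro j
    rw [norm_mul, norm_pow, habsζ, one_pow, one_mul]; exact hh
  have hhm : ‖(-h) ^ m‖ < 1 := by
    rw [norm_pow, norm_neg]
    exact pow_lt_one₀ (norm_nonneg h) hh hm.ne'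
  have hA : (1 : ℂ) - (-h) ^ m ≠ 0 := by
    intro hcon
    have : (-h) ^ m = 1 := by linear_combination -hcon
    rw [this] at hhm; simp at hhm
  have hb : ∀ j : ℕ, (1 : ℂ) + ζ ^ j * h ≠ 0 := by
    intro j hcon
    have heq : ζ ^ j * h = -1 := by linear_combination hcon
    have h1 := habsh j
    rw [heq] at h1; simp at h1
  have hterm : ∀ j ∈ range m,
      (p + ζ ^ j * w) / (1 + ζ ^ j * h)
        = (∑ k ∈ range m, (p * (-h) ^ k * ζ ^ (j * k) + w * (-h) ^ k * ζ ^ (j * (k+1))))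
            / (1 - (-h) ^ m) := by
    intro j _
    have hgeom : (1 + ζ ^ j * h) * (∑ k ∈ range m, (-(ζ ^ j * h)) ^ k) = 1 - (-h) ^ m := by
      have := geom_sum_mul (-(ζ ^ j * h)) m
      have h2 : (-(ζ ^ j * h)) ^ m = (-h) ^ m := by
        rw [show -(ζ ^ j * h) = ζ ^ j * (-h) by ring, mul_pow, ← pow_mul, mul_comm j m,
          pow_mul, hζm, one_pow, one_mul]
      linear_combination -this - h2
    rw [div_eq_div_iff (hb j) hA, ← hgeom]
    have hexp : (∑ k ∈ range m, (p * (-h) ^ k * ζ ^ (j * k) + w * (-h) ^ k * ζ ^ (j * (k+1))))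
        = (p + ζ ^ j * w) * (∑ k ∈ range m, (-(ζ ^ j * h)) ^ k) := by
      rw [Finset.mul_sum]
      refine Finset.sum_congr rfl fun k _ => ?_
      have h3 : (-(ζ ^ j * h)) ^ k = ζ ^ (j * k) * (-h) ^ k := by
        rw [show -(ζ ^ j * h) = ζ ^ j * (-h) by ring, mul_pow, ← pow_mul]
      have h4 : ζ ^ (j * (k+1)) = ζ ^ (j * k) * ζ ^ j := by
        rw [← pow_add]; ring_nf
      rw [h3, h4]; ring
    rw [hexp]; ring
  rw [Finset.sum_congr rfl hterm, ← Finset.sum_div]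
  congr 1
  rw [Finset.sum_comm]
  have hinner : ∀ k ∈ range m,
      (∑ j ∈ range m, (p * (-h) ^ k * ζ ^ (j * k) + w * (-h) ^ k * ζ ^ (j * (k+1))))
        = p * (-h) ^ k * (if m ∣ k then (m:ℂ) else 0)
          + w * (-h) ^ k * (if m ∣ (k+1) then (m:ℂ) else 0) := by
    intro k _
    rw [Finset.sum_add_distrib, ← Finset.mul_sum, ← Finset.mul_sum,
      fisher_rootsum m hm k, fisher_rootsum m hm (k+1)]
  rw [Finset.sum_congr rfl hinner, Finset.sum_add_distrib]
  have h5 : (∑ k ∈ range m, p * (-h) ^ k * (if m ∣ k then (m:ℂ) else 0)) = p * m := by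
    rw [Finset.sum_eq_single_of_mem 0 (Finset.mem_range.mpr hm)
      (fun k hk hk0 => by
        rw [if_neg, mul_zero]
        intro hdvd
        exact hk0 (Nat.eq_zero_of_dvd_of_lt hdvd (Finset.mem_range.mp hk)))]
    simp
  have h6 : (∑ k ∈ range m, w * (-h) ^ k * (if m ∣ (k+1) then (m:ℂ) else 0))
      = w * (-h) ^ (m-1) * m := by
    rw [Finset.sum_eq_single_of_mem (m-1) (Finset.mem_range.mpr (by omega))
      (fun k hk hkm => by
        rw [if_neg, mul_zero]
        intro hdvd
        have := Nat.le_of_dvd (by omega) hdvd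
        have hlt := Finset.mem_range.mp hk
        omega)]
    rw [if_pos (show m ∣ (m-1+1) from by rw [Nat.sub_add_cancel hm])]
  rw [h5, h6]; ring

open Polynomial Finset in
private lemma fisher_polyapprox (f : ℂ → ℂ)
    (hcont : ContinuousOn f (Metric.closedBall (0 : ℂ) 1))
    (hdiff : DifferentiableOn ℂ f (Metric.ball (0 : ℂ) 1))
    (hbd : ∀ z : ℂ, ‖z‖ ≤ 1 → ‖f z‖ ≤ 1)
    (ε : ℝ) (hε : 0 < ε) :
    ∃ (P : Polynomial ℂ) (ρ : ℝ), 0 < ρ ∧ ρ < 1 ∧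
      (∀ z : ℂ, ‖z‖ ≤ 1 → ‖P.eval z‖ ≤ ρ) ∧
      (∀ z : ℂ, ‖z‖ ≤ 1 → ‖f z - P.eval z‖ < ε / 2) := by
  obtain ⟨η, hη0, hη1, hη2⟩ : ∃ η : ℝ, 0 < η ∧ η ≤ 1/2 ∧ η ≤ ε/16 :=
    ⟨min (ε/16) (1/2), lt_min (by linarith) (by norm_num), min_le_right _ _, min_le_left _ _⟩
  have hc := (isCompact_closedBall (0:ℂ) 1).uniformContinuousOn_of_continuous hcont
  rw [Metric.uniformContinuousOn_iff] at hc
  obtain ⟨δ, hδ0, hδ⟩ := hc η hη0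
  obtain ⟨r, hr0, hr1, hrδ⟩ : ∃ r : ℝ, 1/2 ≤ r ∧ r < 1 ∧ 1 - r < δ := by
    refine ⟨1 - min (δ/2) (1/2), ?_, ?_, ?_⟩
    · have := min_le_right (δ/2) (1/2); linarith
    · have : 0 < min (δ/2) (1/2) := lt_min (by linarith) (by norm_num); linarith
    · have := min_le_left (δ/2) (1/2); linarith
  have hrpos : 0 < r := by linarith
  have hmem : ∀ z : ℂ, ‖z‖ ≤ 1 → z ∈ Metric.closedBall (0:ℂ) 1 := by
    intro z hz; simpa [Metric.mem_closedBall, Complex.dist_eq] using hz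
  have hfg : ∀ z : ℂ, ‖z‖ ≤ 1 → ‖f z - f ((r:ℂ) * z)‖ < η := by
    intro z hz
    have h1 : ‖(r:ℂ) * z‖ ≤ 1 := by
      rw [norm_mul, Complex.norm_real, Real.norm_eq_abs, _root_.abs_of_pos hrpos]
      nlinarith [norm_nonneg z]
    have h2 : dist z ((r:ℂ) * z) < δ := by
      rw [Complex.dist_eq]
      have h3 : z - (r:ℂ) * z = ((1 - r : ℝ) : ℂ) * z := by push_cast; ring
      rw [h3, norm_mul, Complex.norm_real, Real.norm_eq_abs, _root_.abs_of_nonneg (by linarith)]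
      nlinarith [norm_nonneg z, hz]
    have := hδ z (hmem z hz) ((r:ℂ)*z) (hmem _ h1) h2
    rwa [Complex.dist_eq] at this
  set g : ℂ → ℂ := fun z => f ((r:ℂ) * z) with hgdef
  obtain ⟨R, hR1, hRr⟩ : ∃ R : ℝ, 1 < R ∧ R * r < 1 := by
    have h1r : 1 < 1/r := by rw [lt_div_iff₀ hrpos]; linarith
    refine ⟨(1 + 1/r)/2, by linarith, ?_⟩
    have h2 : (1 + 1/r)/2 < 1/r := by linarith
    calc (1 + 1/r)/2 * r < (1/r) * r := by nlinarith
    _ = 1 := by field_simp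
  have hR0 : (0:ℝ) ≤ R := by linarith
  have hgdiff : DifferentiableOn ℂ g (Metric.closedBall (0:ℂ) ((⟨R, hR0⟩ : NNReal) : ℝ)) := by
    intro z hz
    have hz' : ‖z‖ ≤ R := by
      simpa [Metric.mem_closedBall, Complex.dist_eq] using hz
    have hrz : (r:ℂ) * z ∈ Metric.ball (0:ℂ) 1 := by
      simp only [Metric.mem_ball, Complex.dist_eq, sub_zero, norm_mul, Complex.norm_real, Real.norm_eq_abs,
        _root_.abs_of_pos hrpos]
      nlinarith [norm_nonneg z]
    have hf : DifferentiableAt ℂ f ((r:ℂ) * z) :=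
      hdiff.differentiableAt (Metric.isOpen_ball.mem_nhds hrz)
    exact (hf.comp z ((differentiableAt_id.const_mul _))).differentiableWithinAt
  have hps := hgdiff.hasFPowerSeriesOnBall (show 0 < (⟨R, hR0⟩ : NNReal) from by
    change (0:ℝ) < R; linarith)
  have hmid : (0:ℝ) ≤ (1+R)/2 := by linarith
  have hr''R : ENNReal.ofNNReal ⟨(1+R)/2, hmid⟩ < ENNReal.ofNNReal ⟨R, hR0⟩ := by
    exact ENNReal.coe_lt_coe.mpr (show (1+R)/2 < R by linarith)
  have htu := hps.tendstoUniformlyOn hr''R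
  rw [Metric.tendstoUniformlyOn_iff] at htu
  obtain ⟨n₀, hn₀⟩ := (htu η hη0).exists
  set q := cauchyPowerSeries g 0 ((⟨R, hR0⟩ : NNReal) : ℝ) with hqdef
  obtain ⟨Q, hQeval⟩ : ∃ Q : Polynomial ℂ, ∀ y : ℂ, Q.eval y = q.partialSum n₀ y := by
    refine ⟨∑ k ∈ range n₀, Polynomial.C (q k (fun _ => 1)) * Polynomial.X ^ k, fun y => ?_⟩
    rw [Polynomial.eval_finset_sum, FormalMultilinearSeries.partialSum]
    refine Finset.sum_congr rfl fun k _ => ?_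
    rw [Polynomial.eval_mul, Polynomial.eval_C, Polynomial.eval_pow, Polynomial.eval_X]
    have h1 : (fun _ : Fin k => y) = fun i : Fin k => y • (1:ℂ) := by
      funext i; simp
    rw [h1, ContinuousMultilinearMap.map_smul_univ]
    simp [Finset.prod_const, smul_eq_mul]
    ring
  have hgQ : ∀ z : ℂ, ‖z‖ ≤ 1 → ‖g z - Q.eval z‖ < η := by
    intro z hz
    have hzmem : z ∈ Metric.ball (0:ℂ) (((⟨(1+R)/2, hmid⟩ : NNReal)) : ℝ) := by
      simp only [Metric.mem_ball, Complex.dist_eq, sub_zero, NNReal.coe_mk]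
      linarith
    have := hn₀ z hzmem
    rw [zero_add, Complex.dist_eq] at this
    rw [hQeval]
    exact this
  have hg1 : ∀ z : ℂ, ‖z‖ ≤ 1 → ‖g z‖ ≤ 1 := by
    intro z hz
    apply hbd
    rw [norm_mul, Complex.norm_real, Real.norm_eq_abs, _root_.abs_of_pos hrpos]
    nlinarith [norm_nonneg z]
  have hQbd : ∀ z : ℂ, ‖z‖ ≤ 1 → ‖Q.eval z‖ ≤ 1 + η := by
    intro z hz
    have he : Q.eval z = g z + -(g z - Q.eval z) := by ring
    rw [he]
    refine le_trans (norm_add_le _ _) ?_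
    rw [norm_neg]
    exact add_le_add (hg1 z hz) (le_of_lt (hgQ z hz))
  refine ⟨Polynomial.C ((1 - 2*η : ℝ) : ℂ) * Q, 1 - η, by linarith, by linarith, ?_, ?_⟩
  · intro z hz
    rw [Polynomial.eval_mul, Polynomial.eval_C, norm_mul, Complex.norm_real, Real.norm_eq_abs,
      _root_.abs_of_nonneg (by linarith)]
    nlinarith [hQbd z hz, norm_nonneg (Q.eval z)]
  · intro z hz
    have h3 : ‖Q.eval z - ((1 - 2*η : ℝ):ℂ) * Q.eval z‖ ≤ 3*η := by
      have he : Q.eval z - ((1 - 2*η : ℝ):ℂ) * Q.eval z = ((2*η:ℝ):ℂ) * Q.eval z := by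
        push_cast; ring
      rw [he, norm_mul, Complex.norm_real, Real.norm_eq_abs, _root_.abs_of_nonneg (by linarith)]
      nlinarith [hQbd z hz, norm_nonneg (Q.eval z)]
    have h4 := hfg z hz
    have h5 := hgQ z hz
    rw [Polynomial.eval_mul, Polynomial.eval_C]
    calc ‖f z - ((1 - 2*η : ℝ):ℂ) * Q.eval z‖
        = ‖(f z - g z)
            + ((g z - Q.eval z) + (Q.eval z - ((1 - 2*η : ℝ):ℂ) * Q.eval z))‖ := by
          congr 1; ring
    _ ≤ ‖f z - g z‖
          + ‖(g z - Q.eval z) + (Q.eval z - ((1 - 2*η : ℝ):ℂ) * Q.eval z)‖ :=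
        norm_add_le _ _
    _ ≤ ‖f z - g z‖
          + (‖g z - Q.eval z‖
              + ‖Q.eval z - ((1 - 2*η : ℝ):ℂ) * Q.eval z‖) := by
        gcongr; exact norm_add_le _ _
    _ < η + (η + 3*η) := add_lt_add_of_lt_of_le h4 (add_le_add h5.le h3)
    _ ≤ ε/2 := by linarith

open Polynomial Finset in
private lemma fisher_Hbound (P : Polynomial ℂ) (n : ℕ) (hn : P.natDegree < n) {ρ : ℝ}
    (hP : ∀ z : ℂ, ‖z‖ ≤ 1 → ‖P.eval z‖ ≤ ρ) :
    ∀ z : ℂ, ‖z‖ ≤ 1 →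
      ‖∑ k ∈ range n, conj (P.coeff k) * z ^ (n - k)‖ ≤ ρ := by
  apply fisher_maxmod
  · apply Differentiable.fun_sum
    intro k _
    exact (differentiable_pow (n - k)).const_mul _
  · intro z hz
    have hzz : conj z * z = 1 := by
      rw [mul_comm, Complex.mul_conj, Complex.normSq_eq_norm_sq, hz]; norm_num
    have key : conj (∑ k ∈ range n, conj (P.coeff k) * z ^ (n - k)) * z ^ n = P.eval z := by
      rw [map_sum, Finset.sum_mul, Polynomial.eval_eq_sum_range' hn]
      refine Finset.sum_congr rfl fun k hk => ?_
      have hkn : k ≤ n := le_of_lt (Finset.mem_range.mp hk)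
      rw [map_mul, RingHomCompTriple.comp_apply]
      have h1 : z ^ n = z ^ (n - k) * z ^ k := by rw [← pow_add]; congr 1; omega
      rw [map_pow]
      have h2 : (conj z) ^ (n - k) * (z ^ (n - k) * z ^ k) = (conj z * z) ^ (n-k) * z ^ k := by
        rw [mul_pow]; ring
      rw [RingHom.id_apply] at *
      calc P.coeff k * (conj z) ^ (n-k) * z ^ n
          = P.coeff k * ((conj z) ^ (n-k) * (z^(n-k) * z^k)) := by
            rw [← h1]; ring
      _ = P.coeff k * ((conj z * z) ^ (n-k) * z ^ k) := by rw [h2]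
      _ = P.coeff k * z ^ k := by rw [hzz, one_pow, one_mul]
    have habs := congrArg (‖·‖) key
    rw [norm_mul, norm_pow, Complex.norm_conj, hz, one_pow, mul_one] at habs
    rw [habs]
    exact hP z (le_of_eq hz)

/-- `f` agrees on the closed unit disk with a finite Blaschke product (of some degree
`n ∈ ℕ`, the empty product, i.e. a unimodular constant, being allowed). -/
def IsFiniteBlaschke (f : ℂ → ℂ) : Prop :=
  ∃ (n : ℕ) (α : ℝ) (z : Fin n → ℂ), (∀ k, ‖z k‖ < 1) ∧
    ∀ w : ℂ, ‖w‖ ≤ 1 →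
      f w = Complex.exp (α * Complex.I) * ∏ k, (z k - w) / (1 - conj (z k) * w)

open Polynomial Finset in
private lemma fisher_blaschke_form (P : Polynomial ℂ) (n : ℕ) (hn : P.natDegree < n) {ρ : ℝ}
    (hρ1 : ρ < 1)
    (hP : ∀ z : ℂ, ‖z‖ ≤ 1 → ‖P.eval z‖ ≤ ρ)
    (u : ℂ) (hu : ‖u‖ = 1) :
    IsFiniteBlaschke (fun z => (Polynomial.C u * Polynomial.X ^ n + P).eval z
      / (1 + u * ∑ k ∈ range n, conj (P.coeff k) * z ^ (n - k))) := by
  have hu0 : u ≠ 0 := by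
    intro h; rw [h] at hu; simp at hu
  have hρ0 : 0 ≤ ρ := le_trans (norm_nonneg _) (hP 0 (by simp))
  set H : ℂ → ℂ := fun z => ∑ k ∈ range n, conj (P.coeff k) * z ^ (n - k) with hHdef
  set N : Polynomial ℂ := Polynomial.C u * Polynomial.X ^ n + P with hNdef
  have hdegCX : (Polynomial.C u * Polynomial.X ^ n).natDegree = n :=
    Polynomial.natDegree_C_mul_X_pow n u hu0
  have hNdeg : N.natDegree = n := by
    rw [hNdef, Polynomial.natDegree_add_eq_left_of_natDegree_lt (by rw [hdegCX]; exact hn),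
      hdegCX]
  have hNcoeff : ∀ k, k < n → N.coeff k = P.coeff k := by
    intro k hk
    rw [hNdef, Polynomial.coeff_add, Polynomial.coeff_C_mul, Polynomial.coeff_X_pow,
      if_neg (by omega : k ≠ n), mul_zero, zero_add]
  have hNn : N.coeff n = u := by
    rw [hNdef, Polynomial.coeff_add, Polynomial.coeff_C_mul, Polynomial.coeff_X_pow,
      if_pos rfl, mul_one, Polynomial.coeff_eq_zero_of_natDegree_lt hn, add_zero]
  have hN0 : N ≠ 0 := Polynomial.ne_zero_of_natDegree_gt (n := 0) (by rw [hNdeg]; omega)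
  have hsplit : Polynomial.Splits N := IsAlgClosed.splits N
  have hcard : Multiset.card N.roots = n := by
    rw [Polynomial.splits_iff_card_roots.mp hsplit, hNdeg]
  have hlead : N.leadingCoeff = u := by
    rw [Polynomial.leadingCoeff, hNdeg, hNn]
  have hfact : N = Polynomial.C u * (N.roots.map fun a => Polynomial.X - Polynomial.C a).prod := by
    conv_lhs => rw [hsplit.eq_prod_roots]
    rw [hlead]
  have heval : ∀ z : ℂ, N.eval z = u * (N.roots.map fun a => z - a).prod := by
    intro z
    conv_lhs => rw [hfact]
    rw [Polynomial.eval_mul, Polynomial.eval_C, Polynomial.eval_multiset_prod,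
      Multiset.map_map]
    exact congrArg (u * ·) (congrArg Multiset.prod
      (Multiset.map_congr rfl fun a _ => by
        simp only [Function.comp_apply, Polynomial.eval_sub, Polynomial.eval_X,
          Polynomial.eval_C]))
  have hkey : ∀ z : ℂ, z ≠ 0 → conj u + H z = z ^ n * conj (N.eval ((conj z)⁻¹)) := by
    intro z hz0
    have hx : conj ((conj z)⁻¹) = z⁻¹ := by
      rw [map_inv₀, Complex.conj_conj]
    rw [Polynomial.eval_eq_sum_range' (show N.natDegree < n + 1 by rw [hNdeg]; omega), map_sum,
      Finset.mul_sum]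
    have hterm : ∀ k ∈ range (n+1),
        z ^ n * conj (N.coeff k * ((conj z)⁻¹) ^ k) = conj (N.coeff k) * z ^ (n - k) := by
      intro k hk
      have hkn : k ≤ n := by have := Finset.mem_range.mp hk; omega
      rw [map_mul, map_pow, hx, inv_pow, pow_sub₀ z hz0 hkn]
      ring
    have hsum2 : ∑ k ∈ range n, conj (N.coeff k) * z ^ (n - k)
        = ∑ k ∈ range n, conj (P.coeff k) * z ^ (n - k) :=
      Finset.sum_congr rfl fun k hk => by rw [hNcoeff k (Finset.mem_range.mp hk)]
    rw [Finset.sum_congr rfl hterm, Finset.sum_range_succ, hNn, Nat.sub_self, pow_zero, mul_one,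
      hsum2]
    simp only [hHdef]
    ring
  -- all roots are inside the open unit disk
  have hroots : ∀ a ∈ N.roots, ‖a‖ < 1 := by
    intro a ha
    by_contra hcon
    push_neg at hcon
    have ha0 : a ≠ 0 := by
      intro h; rw [h] at hcon; simp at hcon; linarith
    have hca : conj a ≠ 0 := by simpa using ha0
    have hb0 : (conj a)⁻¹ ≠ 0 := inv_ne_zero hca
    have hball : ‖(conj a)⁻¹‖ ≤ 1 := by
      rw [norm_inv, Complex.norm_conj]
      exact inv_le_one_of_one_le₀ hcon
    have hinva : (conj ((conj a)⁻¹))⁻¹ = a := by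
      rw [map_inv₀, Complex.conj_conj, inv_inv]
    have heq0 : conj u + H ((conj a)⁻¹) = 0 := by
      rw [hkey _ hb0, hinva]
      have hr := (Polynomial.mem_roots hN0).mp ha
      rw [Polynomial.IsRoot] at hr
      rw [hr, map_zero, mul_zero]
    have hHb := fisher_Hbound P n hn hP ((conj a)⁻¹) hball
    have h2 : conj u = - H ((conj a)⁻¹) := by linear_combination heq0
    have h1 : ‖conj u‖ = 1 := by rw [Complex.norm_conj, hu]
    rw [h2, norm_neg] at h1
    rw [h1] at hHb
    linarith
  -- the reversed polynomial identity
  have hstar : ∀ z : ℂ, conj u + H z = conj u * (N.roots.map fun a => 1 - conj a * z).prod := by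
    intro z
    by_cases hz0 : z = 0
    · subst hz0
      have hH0 : H 0 = 0 := by
        simp only [hHdef]
        refine Finset.sum_eq_zero fun k hk => ?_
        rw [zero_pow (by have := Finset.mem_range.mp hk; omega : n - k ≠ 0), mul_zero]
      have hp1 : (N.roots.map fun a => 1 - conj a * (0:ℂ)).prod = 1 := by
        have : (N.roots.map fun a => 1 - conj a * (0:ℂ)) = N.roots.map fun _ => (1:ℂ) :=
          Multiset.map_congr rfl fun a _ => by ring
        rw [this, Multiset.prod_map_one]
      rw [hH0, hp1, add_zero, mul_one]
    · rw [hkey z hz0, heval]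
      rw [map_mul, map_multiset_prod, Multiset.map_map]
      have hmc : (Multiset.map ((starRingEnd ℂ) ∘ fun a => (conj z)⁻¹ - a) N.roots)
          = Multiset.map (fun a => z⁻¹ - conj a) N.roots :=
        Multiset.map_congr rfl fun a _ => by
          simp only [Function.comp_apply, map_sub, map_inv₀, Complex.conj_conj]
      rw [hmc]
      have hsplit2 : (Multiset.map (fun a => 1 - conj a * z) N.roots).prod
          = z ^ n * (Multiset.map (fun a => z⁻¹ - conj a) N.roots).prod := by
        have h3 : (Multiset.map (fun a => z * (z⁻¹ - conj a)) N.roots).prod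
            = (Multiset.map (fun _ => z) N.roots).prod
              * (Multiset.map (fun a => z⁻¹ - conj a) N.roots).prod :=
          Multiset.prod_map_mul
        have h4 : (Multiset.map (fun a => z * (z⁻¹ - conj a)) N.roots)
            = Multiset.map (fun a => 1 - conj a * z) N.roots :=
          Multiset.map_congr rfl fun a _ => by
            rw [mul_sub, mul_inv_cancel₀ hz0]; ring
        have h5 : (Multiset.map (fun _ => z) N.roots).prod = z ^ n := by
          rw [Multiset.map_const', Multiset.prod_replicate, hcard]
        rw [← h4, h3, h5]
      rw [hsplit2]
      ring
  -- pick a tuple of roots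
  have hlen : N.roots.toList.length = n := by rw [Multiset.length_toList, hcard]
  set t : Fin n → ℂ := fun i => N.roots.toList.get (finCongr hlen.symm i) with htdef
  have htmem : ∀ i, t i ∈ N.roots := fun i => by
    rw [← Multiset.mem_toList]; exact List.get_mem _ _
  have htprod : ∀ g : ℂ → ℂ, (N.roots.map g).prod = ∏ i : Fin n, g (t i) := by
    intro g
    have h1 : (N.roots.toList.map g).prod
        = ∏ i : Fin (N.roots.toList.length), g (N.roots.toList.get i) := by
      conv_lhs => rw [← List.ofFn_get N.roots.toList]
      rw [List.map_ofFn, List.prod_ofFn]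
      rfl
    have h2 : (N.roots.map g).prod = (N.roots.toList.map g).prod := by
      conv_lhs => rw [← Multiset.coe_toList N.roots]
      rw [Multiset.map_coe, Multiset.prod_coe]
    rw [h2, h1]
    exact (Fintype.prod_equiv (finCongr hlen.symm) _ _ fun i => rfl).symm
  -- assemble
  refine ⟨n, Complex.arg (u * (-1)^n), t, fun i => hroots (t i) (htmem i), fun w hw => ?_⟩
  have hc1 : ‖u * (-1)^n‖ = 1 := by
    rw [norm_mul, norm_pow, norm_neg, norm_one, one_pow, mul_one, hu]
  have hcexp : Complex.exp ((Complex.arg (u * (-1)^n) : ℝ) * Complex.I) = u * (-1)^n := by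
    have h6 := Complex.norm_mul_exp_arg_mul_I (u * (-1)^n)
    rw [hc1, Complex.ofReal_one, one_mul] at h6
    exact h6
  rw [hcexp]
  have hden : 1 + u * H w = (N.roots.map fun a => 1 - conj a * w).prod := by
    have h7 : u * conj u = 1 := by
      rw [Complex.mul_conj, Complex.normSq_eq_norm_sq, hu]; norm_num
    calc 1 + u * H w = u * (conj u + H w) := by rw [mul_add, h7]
    _ = u * (conj u * (N.roots.map fun a => 1 - conj a * w).prod) := by rw [hstar w]
    _ = (u * conj u) * (N.roots.map fun a => 1 - conj a * w).prod := by ring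
    _ = _ := by rw [h7, one_mul]
  show Polynomial.eval w N / (1 + u * H w)
      = u * (-1)^n * ∏ k : Fin n, (t k - w) / (1 - conj (t k) * w)
  rw [heval w, hden, htprod, htprod]
  rw [Finset.prod_div_distrib]
  have h8 : ∏ i : Fin n, (t i - w) = (-1)^n * ∏ i : Fin n, (w - t i) := by
    calc ∏ i : Fin n, (t i - w) = ∏ i : Fin n, (-1) * (w - t i) :=
          Finset.prod_congr rfl fun i _ => by ring
    _ = (∏ _i : Fin n, (-1:ℂ)) * ∏ i : Fin n, (w - t i) := Finset.prod_mul_distrib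
    _ = (-1)^n * ∏ i : Fin n, (w - t i) := by
          rw [Finset.prod_const, Finset.card_univ, Fintype.card_fin]
  rw [h8]
  have h9 : ((-1:ℂ))^n * (-1)^n = 1 := by
    rw [← pow_add, ← two_mul, pow_mul]; norm_num
  rw [← mul_div_assoc]
  congr 1
  calc u * ∏ i : Fin n, (w - t i)
      = ((-1:ℂ)^n * (-1)^n) * (u * ∏ i : Fin n, (w - t i)) := by rw [h9, one_mul]
  _ = u * (-1:ℂ)^n * ((-1)^n * ∏ i : Fin n, (w - t i)) := by ring

open Polynomial Finset in
/-- **Fisher.**  Let `f` be continuous on the closed unit disk, analytic on `𝔻`, with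
`|f| ≤ 1` on the closed disk, and let `ε > 0`.  Then there is a convex combination of
finitely many finite Blaschke products which is uniformly within `ε` of `f` on the
closed unit disk. -/
theorem fisher_convex_blaschke_approx (f : ℂ → ℂ)
    (hcont : ContinuousOn f (Metric.closedBall (0 : ℂ) 1))
    (hdiff : DifferentiableOn ℂ f (Metric.ball (0 : ℂ) 1))
    (hbd : ∀ z : ℂ, ‖z‖ ≤ 1 → ‖f z‖ ≤ 1)
    (ε : ℝ) (hε : 0 < ε) :
    ∃ (m : ℕ) (lam : Fin m → ℝ) (B : Fin m → ℂ → ℂ),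
      (∀ j, 0 ≤ lam j) ∧ (∑ j, lam j = 1) ∧ (∀ j, IsFiniteBlaschke (B j)) ∧
      ∀ z : ℂ, ‖z‖ ≤ 1 →
        ‖f z - ∑ j, (lam j : ℂ) * B j z‖ < ε := by
  obtain ⟨P, ρ, hρ0, hρ1, hPle, hfP⟩ := fisher_polyapprox f hcont hdiff hbd ε hε
  obtain ⟨m', hm'⟩ : ∃ m' : ℕ, ρ ^ m' < (1 - ρ) * (ε/2) / 2 := by
    have hpos : 0 < (1 - ρ) * (ε/2) / 2 := by
      have h1 : 0 < 1 - ρ := by linarith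
      positivity
    exact ((tendsto_pow_atTop_nhds_zero_of_lt_one (le_of_lt hρ0) hρ1).eventually
      (gt_mem_nhds hpos)).exists
  obtain ⟨m, hmdef, hm0⟩ : ∃ m : ℕ, m = m' + 1 ∧ 0 < m := ⟨m' + 1, rfl, Nat.succ_pos _⟩
  obtain ⟨n, hn⟩ : ∃ n : ℕ, P.natDegree < n := ⟨P.natDegree + 1, by omega⟩
  set ζ : ℂ := Complex.exp (2 * Real.pi * Complex.I / m) with hζdef
  have hζabs : ‖ζ‖ = 1 := by
    rw [hζdef, Complex.norm_exp]; norm_num [Complex.div_re]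
  set H : ℂ → ℂ := fun z => ∑ k ∈ range n, conj (P.coeff k) * z ^ (n - k) with hHdef
  have hmR : (m:ℝ) ≠ 0 := by exact_mod_cast hm0.ne'
  have hmC : (m:ℂ) ≠ 0 := by exact_mod_cast hm0.ne'
  refine ⟨m, fun _ => 1/(m:ℝ), fun j z =>
      (Polynomial.C (ζ ^ (j:ℕ)) * Polynomial.X ^ n + P).eval z / (1 + ζ ^ (j:ℕ) * H z),
    ?_, ?_, ?_, ?_⟩
  · intro j
    positivity
  · rw [Finset.sum_const, Finset.card_univ, Fintype.card_fin, nsmul_eq_mul]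
    field_simp
  · intro j
    exact fisher_blaschke_form P n hn hρ1 hPle (ζ ^ (j:ℕ))
      (by rw [norm_pow, hζabs, one_pow])
  · intro z hz
    have hHb : ‖H z‖ ≤ ρ := fisher_Hbound P n hn hPle z hz
    have hhlt : ‖H z‖ < 1 := lt_of_le_of_lt hHb hρ1
    have hsum := fisher_sumident m hm0 (P.eval z) (z^n) (H z) hhlt
    have hconv : (∑ j : Fin m, (((1/(m:ℝ)) : ℝ) : ℂ)
          * ((Polynomial.C (ζ ^ (j:ℕ)) * Polynomial.X ^ n + P).eval z
              / (1 + ζ ^ (j:ℕ) * H z)))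
        = (P.eval z + z^n * (-H z)^(m-1)) / (1 - (-H z)^m) := by
      have h1 : ∀ j : Fin m, (((1/(m:ℝ)) : ℝ) : ℂ)
            * ((Polynomial.C (ζ ^ (j:ℕ)) * Polynomial.X ^ n + P).eval z
                / (1 + ζ ^ (j:ℕ) * H z))
          = (1/(m:ℂ)) * ((P.eval z + ζ ^ (j:ℕ) * z^n) / (1 + ζ ^ (j:ℕ) * H z)) := by
        intro j
        rw [Polynomial.eval_add, Polynomial.eval_mul, Polynomial.eval_C, Polynomial.eval_pow,
          Polynomial.eval_X]
        push_cast
        ring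
      rw [Finset.sum_congr rfl (fun j _ => h1 j), ← Finset.mul_sum,
        Fin.sum_univ_eq_sum_range (fun j => (P.eval z + ζ ^ j * z^n) / (1 + ζ ^ j * H z)) m,
        hsum, mul_div_assoc, ← mul_assoc, one_div_mul_cancel hmC, one_mul]
    rw [hconv]
    -- numerical estimate
    have hxabs : ‖-H z‖ ≤ ρ := by rw [norm_neg]; exact hHb
    have hxm : ‖(-H z)^m‖ ≤ ρ := by
      rw [norm_pow]
      calc (‖-H z‖)^m ≤ ρ^m := pow_le_pow_left₀ (norm_nonneg _) hxabs m
      _ ≤ ρ := pow_le_of_le_one (le_of_lt hρ0) (le_of_lt hρ1) (by omega)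
    have hA : 1 - ρ ≤ ‖1 - (-H z)^m‖ := by
      have h3 : ‖(1:ℂ)‖ ≤ ‖1 - (-H z)^m‖ + ‖(-H z)^m‖ := by
        calc ‖(1:ℂ)‖ = ‖(1 - (-H z)^m) + (-H z)^m‖ := by norm_num
        _ ≤ _ := norm_add_le _ _
      rw [norm_one] at h3
      linarith
    have hA0 : (1:ℂ) - (-H z)^m ≠ 0 := by
      intro h; rw [h] at hA; simp at hA; linarith
    have hdiffid : (P.eval z + z^n * (-H z)^(m-1))/(1 - (-H z)^m) - P.eval z
        = (z^n * (-H z)^(m-1) + P.eval z * (-H z)^m)/(1 - (-H z)^m) := by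
      field_simp
      ring
    have hnum : ‖z^n * (-H z)^(m-1) + P.eval z * (-H z)^m‖ ≤ 2 * ρ^(m-1) := by
      have b1 : ‖z^n‖ ≤ 1 := by
        rw [norm_pow]; exact pow_le_one₀ (norm_nonneg _) hz
      have b2 : ‖(-H z)^(m-1)‖ ≤ ρ^(m-1) := by
        rw [norm_pow]; exact pow_le_pow_left₀ (norm_nonneg _) hxabs _
      have b3 : ‖P.eval z‖ ≤ ρ := hPle z hz
      have b4 : ‖(-H z)^m‖ ≤ ρ^(m-1) := by
        rw [norm_pow]
        calc (‖-H z‖)^m ≤ ρ^m := pow_le_pow_left₀ (norm_nonneg _) hxabs m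
        _ ≤ ρ^(m-1) := pow_le_pow_of_le_one (le_of_lt hρ0) (le_of_lt hρ1) (by omega)
      have hpow0 : (0:ℝ) ≤ ρ^(m-1) := pow_nonneg (le_of_lt hρ0) _
      calc ‖z^n * (-H z)^(m-1) + P.eval z * (-H z)^m‖
          ≤ ‖z^n * (-H z)^(m-1)‖ + ‖P.eval z * (-H z)^m‖ :=
            norm_add_le _ _
      _ = ‖z^n‖ * ‖(-H z)^(m-1)‖
            + ‖P.eval z‖ * ‖(-H z)^m‖ := by rw [norm_mul, norm_mul]
      _ ≤ 2 * ρ^(m-1) := by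
            nlinarith [norm_nonneg (z^n), norm_nonneg (P.eval z),
              norm_nonneg ((-H z)^(m-1)), norm_nonneg ((-H z)^m)]
    have havg : ‖(P.eval z + z^n * (-H z)^(m-1))/(1 - (-H z)^m) - P.eval z‖
        ≤ 2*ρ^(m-1)/(1-ρ) := by
      rw [hdiffid, norm_div]
      exact div_le_div₀ (by positivity) hnum (by linarith) hA
    have hsmall : 2*ρ^(m-1)/(1-ρ) < ε/2 := by
      rw [div_lt_iff₀ (by linarith : (0:ℝ) < 1 - ρ)]
      have hm1 : m - 1 = m' := by omega
      rw [hm1]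
      nlinarith [hm']
    have htri : ‖f z - (P.eval z + z^n * (-H z)^(m-1))/(1 - (-H z)^m)‖
        ≤ ‖f z - P.eval z‖
          + ‖(P.eval z + z^n * (-H z)^(m-1))/(1 - (-H z)^m) - P.eval z‖ := by
      have he : f z - (P.eval z + z^n * (-H z)^(m-1))/(1 - (-H z)^m)
          = (f z - P.eval z)
            + -((P.eval z + z^n * (-H z)^(m-1))/(1 - (-H z)^m) - P.eval z) := by ring
      rw [he]
      refine le_trans (norm_add_le _ _) ?_
      rw [norm_neg]
    calc ‖f z - (P.eval z + z^n * (-H z)^(m-1))/(1 - (-H z)^m)‖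
        ≤ ‖f z - P.eval z‖
          + ‖(P.eval z + z^n * (-H z)^(m-1))/(1 - (-H z)^m) - P.eval z‖ := htri
    _ < ε/2 + ε/2 := add_lt_add_of_lt_of_le (hfP z hz) (le_trans havg (le_of_lt hsmall))
    _ = ε := by ring
end

section
/- Let B be a finite Blaschke product. Then for every ζ on the unit circle 𝕋, the limit as z → ζ with z ∈ 𝔻 of (1 − |B(z)|²)/(1 − |z|²) exists and equals |B'(ζ)|, and likewise the limit as z → ζ with z ∈ 𝔻 of (1 − |B(z)|)/(1 − |z|) equals |B'(ζ)|. -/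
open Complex ComplexConjugate Filter Topology Finset

private lemma tele (n : ℕ) (a : ℕ → ℝ) :
    1 - ∏ i ∈ range n, a i = ∑ i ∈ range n, (1 - a i) * ∏ j ∈ range i, a j := by
  induction n with
  | zero => simp
  | succ m ih => rw [Finset.prod_range_succ, Finset.sum_range_succ, ← ih]; ring

private lemma abs_den_sub (z0 w : ℂ) :
    ‖1 - conj z0 * w‖ ^ 2 - ‖z0 - w‖ ^ 2
      = (1 - ‖z0‖ ^ 2) * (1 - ‖w‖ ^ 2) := by
  simp only [Complex.sq_norm, Complex.normSq_apply, Complex.sub_re, Complex.sub_im,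
    Complex.mul_re, Complex.mul_im, Complex.one_re, Complex.one_im, Complex.conj_re,
    Complex.conj_im]
  ring

private lemma key_sq (z0 w : ℂ) (hd : (1 : ℂ) - conj z0 * w ≠ 0) :
    1 - ‖(z0 - w) / (1 - conj z0 * w)‖ ^ 2
      = (1 - ‖z0‖ ^ 2) * (1 - ‖w‖ ^ 2)
        / ‖1 - conj z0 * w‖ ^ 2 := by
  have h0 : ‖1 - conj z0 * w‖ ≠ 0 := norm_ne_zero_iff.mpr hd
  rw [norm_div, div_pow, ← abs_den_sub z0 w]
  rw [one_sub_div (pow_ne_zero 2 h0)]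

/-- Let `B` be a finite Blaschke product.  Then for every `ζ` on the unit circle, the
limit as `z → ζ` with `z ∈ 𝔻` of `(1 − |B(z)|²)/(1 − |z|²)` exists and equals `|B'(ζ)|`,
and likewise the limit of `(1 − |B(z)|)/(1 − |z|)` equals `|B'(ζ)|`. -/
theorem blaschke_boundary_derivative_limit (n : ℕ) (α : ℝ) (z : Fin n → ℂ)
    (hz : ∀ k, ‖z k‖ < 1) (B : ℂ → ℂ)
    (hB : B = fun w => Complex.exp (α * Complex.I) * ∏ k, (z k - w) / (1 - conj (z k) * w))
    (ζ : ℂ) (hζ : ‖ζ‖ = 1) :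
    Tendsto (fun w : ℂ => (1 - ‖B w‖ ^ 2) / (1 - ‖w‖ ^ 2))
        (𝓝[Metric.ball (0 : ℂ) 1] ζ) (𝓝 (‖deriv B ζ‖)) ∧
      Tendsto (fun w : ℂ => (1 - ‖B w‖) / (1 - ‖w‖))
        (𝓝[Metric.ball (0 : ℂ) 1] ζ) (𝓝 (‖deriv B ζ‖)) := by
  set c : ℂ := Complex.exp (α * Complex.I) with hc
  have habsc : ‖c‖ = 1 := Complex.norm_exp_ofReal_mul_I α
  set zz : ℕ → ℂ := fun i => if h : i < n then z ⟨i, h⟩ else 0 with hzz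
  have hzlt : ∀ i ∈ range n, ‖zz i‖ < 1 := by
    intro i hi
    rw [Finset.mem_range] at hi
    simp only [hzz, dif_pos hi]
    exact hz _
  set b : ℕ → ℂ → ℂ := fun i w => (zz i - w) / (1 - conj (zz i) * w) with hb
  have hBfun : B = fun w => c * ∏ i ∈ range n, b i w := by
    rw [hB]
    funext w
    congr 1
    rw [← Fin.prod_univ_eq_prod_range (fun i => b i w) n]
    refine Finset.prod_congr rfl fun k _ => ?_
    simp only [hb, hzz, dif_pos k.isLt]
  have hden : ∀ i ∈ range n, ∀ w : ℂ, ‖w‖ ≤ 1 → (1 : ℂ) - conj (zz i) * w ≠ 0 := by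
    intro i hi w hw h
    have h1 : conj (zz i) * w = 1 := by linear_combination -h
    have : ‖conj (zz i) * w‖ < 1 := by
      rw [norm_mul, Complex.norm_conj]
      calc ‖zz i‖ * ‖w‖ ≤ ‖zz i‖ * 1 := by
            exact mul_le_mul_of_nonneg_left hw (norm_nonneg _)
        _ < 1 := by simpa using hzlt i hi
    rw [h1] at this; simp at this
  have hdenζ : ∀ i ∈ range n, (1 : ℂ) - conj (zz i) * ζ ≠ 0 :=
    fun i hi => hden i hi ζ hζ.le
  -- on the circle the denominator equals ζ * conj (ζ - z0)
  have hcirc : ∀ z0 : ℂ, (1 : ℂ) - conj z0 * ζ = ζ * conj (ζ - z0) := by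
    intro z0
    have h1 : ζ * conj ζ = 1 := by
      rw [Complex.mul_conj]
      norm_cast
      rw [← Complex.sq_norm, hζ]; norm_num
    rw [map_sub]
    ring_nf
    linear_combination -h1
  have hbζabs : ∀ i ∈ range n, ‖b i ζ‖ = 1 := by
    intro i hi
    have heq : ‖1 - conj (zz i) * ζ‖ = ‖zz i - ζ‖ := by
      rw [hcirc (zz i), norm_mul, hζ, one_mul, Complex.norm_conj]
      exact norm_sub_rev ζ (zz i)
    have hne : ‖1 - conj (zz i) * ζ‖ ≠ 0 := norm_ne_zero_iff.mpr (hdenζ i hi)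
    rw [hb]
    simp only [norm_div]
    rw [← heq, div_self hne]
  have hzeta1 : ζ * conj ζ = 1 := by
    rw [Complex.mul_conj]
    norm_cast
    rw [← Complex.sq_norm, hζ]; norm_num
  set S : ℝ := ∑ i ∈ range n,
      (1 - ‖zz i‖ ^ 2) / ‖1 - conj (zz i) * ζ‖ ^ 2 with hS
  have hS_nonneg : 0 ≤ S := by
    refine Finset.sum_nonneg fun i hi => div_nonneg ?_ (sq_nonneg _)
    nlinarith [hzlt i hi, norm_nonneg (zz i)]
  set G : ℂ → ℝ := fun w => ∑ i ∈ range n,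
      (1 - ‖zz i‖ ^ 2) / ‖1 - conj (zz i) * w‖ ^ 2
        * ∏ j ∈ range i, ‖b j w‖ ^ 2 with hG
  have hGtends : Tendsto G (𝓝 ζ) (𝓝 S) := by
    have hSval : S = ∑ i ∈ range n,
        (1 - ‖zz i‖ ^ 2) / ‖1 - conj (zz i) * ζ‖ ^ 2
          * ∏ j ∈ range i, ‖b j ζ‖ ^ 2 := by
      refine Finset.sum_congr rfl fun i hi => ?_
      have hp1 : ∏ j ∈ range i, ‖b j ζ‖ ^ 2 = 1 := by
        refine Finset.prod_eq_one fun j hj => ?_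
        rw [hbζabs j (Finset.mem_range.mpr
          (lt_trans (Finset.mem_range.mp hj) (Finset.mem_range.mp hi)))]
        norm_num
      rw [hp1, mul_one]
    rw [hSval, hG]
    refine tendsto_finset_sum _ fun i hi => ContinuousAt.mul ?_ ?_
    · refine ContinuousAt.div continuousAt_const ?_ ?_
      · exact ((continuous_norm.comp
          (continuous_const.sub (continuous_const.mul continuous_id))).pow 2).continuousAt
      · exact pow_ne_zero 2 (norm_ne_zero_iff.mpr (hdenζ i hi))
    · refine tendsto_finset_prod _ fun j hj => ?_
      have hjn : j ∈ range n := Finset.mem_range.mpr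
        (lt_trans (Finset.mem_range.mp hj) (Finset.mem_range.mp hi))
      have hb1 : ContinuousAt (fun w => b j w) ζ := by
        refine ContinuousAt.div ?_ ?_ (hdenζ j hjn)
        · exact (continuous_const.sub continuous_id).continuousAt
        · exact (continuous_const.sub (continuous_const.mul continuous_id)).continuousAt
      exact (continuous_norm.continuousAt.comp hb1).pow 2
  have hFG : ∀ w ∈ Metric.ball (0:ℂ) 1,
      (1 - ‖B w‖ ^ 2) / (1 - ‖w‖ ^ 2) = G w := by
    intro w hw
    have hwlt : ‖w‖ < 1 := by
      rwa [Metric.mem_ball, dist_zero_right] at hw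
    have hw2 : (1 : ℝ) - ‖w‖ ^ 2 ≠ 0 := by nlinarith [norm_nonneg w]
    have hBabs2 : ‖B w‖ ^ 2 = ∏ i ∈ range n, ‖b i w‖ ^ 2 := by
      simp only [hBfun]
      rw [norm_mul, habsc, one_mul, norm_prod, ← Finset.prod_pow]
    rw [hBabs2, tele, Finset.sum_div, hG]
    refine Finset.sum_congr rfl fun i hi => ?_
    have hdw : (1 : ℂ) - conj (zz i) * w ≠ 0 := hden i hi w hwlt.le
    have hd2 : ‖1 - conj (zz i) * w‖ ^ 2 ≠ 0 :=
      pow_ne_zero _ (norm_ne_zero_iff.mpr hdw)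
    rw [show (1 : ℝ) - ‖b i w‖ ^ 2
        = (1 - ‖zz i‖ ^ 2) * (1 - ‖w‖ ^ 2)
          / ‖1 - conj (zz i) * w‖ ^ 2 from key_sq (zz i) w hdw]
    field_simp
  have hT1 : Tendsto (fun w : ℂ => (1 - ‖B w‖ ^ 2) / (1 - ‖w‖ ^ 2))
      (𝓝[Metric.ball (0 : ℂ) 1] ζ) (𝓝 S) := by
    refine Tendsto.congr' ?_ (hGtends.mono_left nhdsWithin_le_nhds)
    filter_upwards [self_mem_nhdsWithin] with w hw
    exact (hFG w hw).symm
  -- the derivative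
  have hderiv : ∀ i ∈ range n, HasDerivAt (b i)
      (((Complex.normSq (zz i) : ℂ) - 1) / (1 - conj (zz i) * ζ) ^ 2) ζ := by
    intro i hi
    have h1 : HasDerivAt (fun w : ℂ => zz i - w) (-1) ζ := (hasDerivAt_id ζ).const_sub (zz i)
    have h2 : HasDerivAt (fun w : ℂ => 1 - conj (zz i) * w) (-(conj (zz i))) ζ := by
      simpa using ((hasDerivAt_id ζ).const_mul (conj (zz i))).const_sub 1
    have h3 := h1.div h2 (hdenζ i hi)
    refine (h3 : HasDerivAt (b i) _ ζ).congr_deriv ?_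
    symm
    have hms : conj (zz i) * zz i = (Complex.normSq (zz i) : ℂ) := by
      rw [mul_comm, Complex.mul_conj]
    have hdd : ((1 : ℂ) - conj (zz i) * ζ) ^ 2 ≠ 0 := pow_ne_zero 2 (hdenζ i hi)
    rw [div_left_inj' hdd]
    linear_combination -hms
  have hderB : HasDerivAt B (c * ∑ i ∈ range n,
      (∏ j ∈ (range n).erase i, b j ζ)
        • (((Complex.normSq (zz i) : ℂ) - 1) / (1 - conj (zz i) * ζ) ^ 2)) ζ := by
    rw [hBfun]
    exact HasDerivAt.const_mul c (by convert HasDerivAt.finset_prod hderiv using 1; funext w; simp [Finset.prod_apply])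
  have habsBζ : ‖B ζ‖ = 1 := by
    simp only [hBfun]
    rw [norm_mul, habsc, one_mul, norm_prod]
    exact Finset.prod_eq_one hbζabs
  have hterm : ∀ i ∈ range n,
      ζ * (((Complex.normSq (zz i) : ℂ) - 1) / (1 - conj (zz i) * ζ) ^ 2) * conj (b i ζ)
        = (1 - ((‖zz i‖ : ℂ)) ^ 2)
            / ((‖1 - conj (zz i) * ζ‖ : ℂ)) ^ 2 := by
    intro i hi
    have hd := hdenζ i hi
    have h1 : ζ * conj (zz i - ζ) = -(1 - conj (zz i) * ζ) := by
      rw [map_sub, mul_sub]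
      linear_combination -hzeta1
    have ha : ((‖zz i‖ : ℂ)) ^ 2 = (Complex.normSq (zz i) : ℂ) := by
      norm_cast
      exact Complex.sq_norm _
    have ha2 : ((‖1 - conj (zz i) * ζ‖ : ℂ)) ^ 2
        = (Complex.normSq (1 - conj (zz i) * ζ) : ℂ) := by
      norm_cast
      exact Complex.sq_norm _
    have hb2 : ((‖1 - conj (zz i) * ζ‖ : ℂ)) ^ 2
        = (1 - conj (zz i) * ζ) * conj (1 - conj (zz i) * ζ) := by
      rw [ha2, ← Complex.mul_conj]
    rw [hb]
    simp only [map_div₀]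
    rw [ha, hb2]
    set d : ℂ := 1 - conj (zz i) * ζ with hdef
    clear_value d
    calc ζ * (((Complex.normSq (zz i) : ℂ) - 1) / d ^ 2)
          * (conj (zz i - ζ) / conj d)
        = (ζ * conj (zz i - ζ)) * (((Complex.normSq (zz i) : ℂ) - 1)
            / (d ^ 2 * conj d)) := by ring
      _ = (d * (1 - (Complex.normSq (zz i) : ℂ)))
            / (d
              * (d * conj d)) := by
          rw [h1]; ring
      _ = (1 - (Complex.normSq (zz i) : ℂ))
            / (d * conj d) := by
          rw [mul_div_mul_left _ _ hd]
  have hkey : ζ * deriv B ζ * conj (B ζ) = (S : ℂ) := by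
    rw [hderB.deriv]
    simp only [hBfun]
    rw [map_mul, map_prod]
    have hcc : c * conj c = 1 := by
      rw [Complex.mul_conj]
      norm_cast
      rw [← Complex.sq_norm, habsc]; norm_num
    rw [hS]
    push_cast
    simp only [Finset.mul_sum, Finset.sum_mul, smul_eq_mul]
    refine Finset.sum_congr rfl fun i hi => ?_
    have hP : (∏ j ∈ (range n).erase i, b j ζ)
        * (∏ j ∈ (range n).erase i, conj (b j ζ)) = 1 := by
      rw [← Finset.prod_mul_distrib]
      refine Finset.prod_eq_one fun j hj => ?_
      rw [Complex.mul_conj]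
      norm_cast
      rw [← Complex.sq_norm, hbζabs j (Finset.mem_of_mem_erase hj)]; norm_num
    have hQ : ∏ j ∈ range n, conj (b j ζ)
        = conj (b i ζ) * ∏ j ∈ (range n).erase i, conj (b j ζ) :=
      (Finset.mul_prod_erase (range n) (fun j => conj (b j ζ)) hi).symm
    rw [hQ]
    have hstep : ζ * (c * ((∏ j ∈ (range n).erase i, b j ζ)
            * (((Complex.normSq (zz i) : ℂ) - 1) / (1 - conj (zz i) * ζ) ^ 2)))
          * (conj c * (conj (b i ζ) * ∏ j ∈ (range n).erase i, conj (b j ζ)))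
        = (c * conj c) * ((∏ j ∈ (range n).erase i, b j ζ)
            * (∏ j ∈ (range n).erase i, conj (b j ζ)))
          * (ζ * (((Complex.normSq (zz i) : ℂ) - 1) / (1 - conj (zz i) * ζ) ^ 2)
            * conj (b i ζ)) := by ring
    rw [hstep, hcc, hP, hterm i hi, one_mul, one_mul]
  have habsderiv : ‖deriv B ζ‖ = S := by
    have h := congrArg (‖·‖) hkey
    rwa [norm_mul, norm_mul, hζ, one_mul, Complex.norm_conj, habsBζ, mul_one,
      Complex.norm_real, Real.norm_eq_abs, _root_.abs_of_nonneg hS_nonneg] at h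
  have habsB : Tendsto (fun w => ‖B w‖) (𝓝 ζ) (𝓝 1) := by
    have hc1 : ContinuousAt B ζ := hderB.differentiableAt.continuousAt
    have h := (continuous_norm.tendsto (B ζ)).comp hc1
    rw [habsBζ] at h
    simpa [Function.comp_def] using h
  have habsw : Tendsto (fun w : ℂ => ‖w‖) (𝓝 ζ) (𝓝 1) := by
    have h := continuous_norm.tendsto ζ
    rwa [hζ] at h
  have hT2 : Tendsto (fun w : ℂ => (1 - ‖B w‖) / (1 - ‖w‖))
      (𝓝[Metric.ball (0 : ℂ) 1] ζ) (𝓝 S) := by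
    have hfac : Tendsto (fun w : ℂ => (1 + ‖w‖) / (1 + ‖B w‖))
        (𝓝 ζ) (𝓝 1) := by
      have hnum : Tendsto (fun w : ℂ => 1 + ‖w‖) (𝓝 ζ) (𝓝 ((1 : ℝ) + 1)) :=
        tendsto_const_nhds.add habsw
      have hden2 : Tendsto (fun w : ℂ => 1 + ‖B w‖) (𝓝 ζ) (𝓝 ((1 : ℝ) + 1)) :=
        tendsto_const_nhds.add habsB
      have h := hnum.div hden2 (by norm_num : (1 : ℝ) + 1 ≠ 0)
      norm_num at h
      exact h
    have hmul := hT1.mul (hfac.mono_left nhdsWithin_le_nhds)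
    rw [mul_one] at hmul
    refine Tendsto.congr' ?_ hmul
    filter_upwards [self_mem_nhdsWithin] with w hw
    have hwlt : ‖w‖ < 1 := by
      rwa [Metric.mem_ball, dist_zero_right] at hw
    have h1 : (1 : ℝ) - ‖w‖ ≠ 0 := by linarith
    have h2 : (1 : ℝ) + ‖w‖ ≠ 0 := by
      have := norm_nonneg w; linarith
    have h3 : (1 : ℝ) + ‖B w‖ ≠ 0 := by
      have := norm_nonneg (B w); linarith
    have h4 : (1 : ℝ) - ‖w‖ ^ 2 ≠ 0 := by nlinarith [norm_nonneg w]
    field_simp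
    ring
  rw [habsderiv]
  exact ⟨hT1, hT2⟩
end

section
/- Let B be a finite Blaschke product of degree n ≥ 1. Then the limit, as |z| → 1 with z ∈ 𝔻, of |B'(z)|·(1 − |z|²)/(1 − |B(z)|²) equals 1; that is, for every ε > 0 there exists r ∈ (0,1) such that ||B'(z)|(1 − |z|²)/(1 − |B(z)|²) − 1| < ε whenever r < |z| < 1. -/
open Complex ComplexConjugate

lemma aux_A {ι : Type*} (s : Finset ι) (t : ι → ℝ) (h0 : ∀ i ∈ s, 0 ≤ t i)
    (h1 : ∀ i ∈ s, t i ≤ 1) : 1 - ∏ i ∈ s, t i ≤ ∑ i ∈ s, (1 - t i) := by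
  classical
  induction s using Finset.induction_on with
  | empty => simp
  | insert a s' hni ih =>
    rw [Finset.prod_insert hni, Finset.sum_insert hni]
    have hP : 0 ≤ ∏ i ∈ s', t i := Finset.prod_nonneg fun i hi => h0 i (Finset.mem_insert_of_mem hi)
    have hih := ih (fun i hi => h0 i (Finset.mem_insert_of_mem hi))
      (fun i hi => h1 i (Finset.mem_insert_of_mem hi))
    have ha0 := h0 a (Finset.mem_insert_self a s')
    have ha1 := h1 a (Finset.mem_insert_self a s')
    have h3 := mul_le_mul_of_nonneg_left hih ha0
    have hS : 0 ≤ ∑ i ∈ s', (1 - t i) :=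
      Finset.sum_nonneg fun i hi => by linarith [h1 i (Finset.mem_insert_of_mem hi)]
    nlinarith [mul_le_of_le_one_left hS ha1]

lemma aux_B {ι : Type*} (s : Finset ι) (t : ι → ℝ) (h0 : ∀ i ∈ s, 0 ≤ t i)
    (h1 : ∀ i ∈ s, t i ≤ 1) : (∏ i ∈ s, t i) * ∑ i ∈ s, (1 - t i) ≤ 1 - ∏ i ∈ s, t i := by
  classical
  induction s using Finset.induction_on with
  | empty => simp
  | insert a s' hni ih =>
    rw [Finset.prod_insert hni, Finset.sum_insert hni]
    have hP : 0 ≤ ∏ i ∈ s', t i := Finset.prod_nonneg fun i hi => h0 i (Finset.mem_insert_of_mem hi)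
    have hP1 : ∏ i ∈ s', t i ≤ 1 :=
      Finset.prod_le_one (fun i hi => h0 i (Finset.mem_insert_of_mem hi))
        (fun i hi => h1 i (Finset.mem_insert_of_mem hi))
    have hS : 0 ≤ ∑ i ∈ s', (1 - t i) :=
      Finset.sum_nonneg fun i hi => by linarith [h1 i (Finset.mem_insert_of_mem hi)]
    have hih := ih (fun i hi => h0 i (Finset.mem_insert_of_mem hi))
      (fun i hi => h1 i (Finset.mem_insert_of_mem hi))
    have ha0 := h0 a (Finset.mem_insert_self a s')
    have ha1 := h1 a (Finset.mem_insert_self a s')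
    have h3 := mul_le_mul_of_nonneg_left hih ha0
    nlinarith [mul_nonneg (sub_nonneg.2 ha1) (sub_nonneg.2 hP1), sq_nonneg (1 - t a),
      mul_nonneg ha0 (mul_nonneg (sub_nonneg.2 ha1) (sub_nonneg.2 hP1))]

lemma cast_sq_abs (a : ℂ) : ((‖a‖ ^ 2 : ℝ) : ℂ) = a * conj a := by
  rw [Complex.sq_norm]; exact (Complex.mul_conj a).symm

set_option maxHeartbeats 1000000 in
/-- Let `B` be a finite Blaschke product of degree `n ≥ 1`.  Then
`|B'(z)| (1 − |z|²)/(1 − |B(z)|²) → 1` as `|z| → 1` with `z ∈ 𝔻`: for every `ε > 0`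
there is `r ∈ (0,1)` such that the quantity is within `ε` of `1` whenever
`r < |z| < 1`. -/
theorem blaschke_angular_derivative_limit (n : ℕ) (hn : 1 ≤ n) (α : ℝ) (z : Fin n → ℂ)
    (hz : ∀ k, ‖z k‖ < 1) (B : ℂ → ℂ)
    (hB : B = fun w => Complex.exp (α * Complex.I) * ∏ k, (z k - w) / (1 - conj (z k) * w))
    (ε : ℝ) (hε : 0 < ε) :
    ∃ r : ℝ, 0 < r ∧ r < 1 ∧ ∀ w : ℂ, r < ‖w‖ → ‖w‖ < 1 →
      |‖deriv B w‖ * (1 - ‖w‖ ^ 2) / (1 - ‖B w‖ ^ 2)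
        - 1| < ε := by
  classical
  haveI : Nonempty (Fin n) := ⟨⟨0, hn⟩⟩
  set m : ℝ := Finset.univ.sup' Finset.univ_nonempty (fun k => ‖z k‖) with hm
  have hmle : ∀ k, ‖z k‖ ≤ m := fun k => Finset.le_sup' (fun k => ‖z k‖) (Finset.mem_univ k)
  have hm0 : 0 ≤ m := le_trans (norm_nonneg _) (hmle ⟨0, hn⟩)
  have hm1 : m < 1 := by
    rw [hm, Finset.sup'_lt_iff]
    exact fun k _ => hz k
  -- choose r via a limiting argument
  set u : ℝ → ℝ := fun x => (1 - x ^ 2) / (x - m) with hu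
  set p : ℝ → ℝ := fun x => 1 - n * (1 - x ^ 2) / (1 - m) ^ 2 with hp
  have htu : Filter.Tendsto u (nhdsWithin 1 (Set.Ioo m 1)) (nhds 0) := by
    have hc : ContinuousAt u 1 := by
      apply ContinuousAt.div (by fun_prop) (by fun_prop)
      simp only [ne_eq]
      intro h; linarith [sub_eq_zero.1 h]
    have h0 : u 1 = 0 := by simp [hu]
    have h2 : Filter.Tendsto u (nhdsWithin 1 (Set.Ioo m 1)) (nhds (u 1)) :=
      hc.tendsto.mono_left nhdsWithin_le_nhds
    rwa [h0] at h2
  have htp : Filter.Tendsto p (nhdsWithin 1 (Set.Ioo m 1)) (nhds 1) := by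
    have hc : ContinuousAt p 1 := by
      apply ContinuousAt.sub continuousAt_const
      exact ContinuousAt.div_const (by fun_prop) _
    have h0 : p 1 = 1 := by simp [hp]
    have h2 : Filter.Tendsto p (nhdsWithin 1 (Set.Ioo m 1)) (nhds (p 1)) :=
      hc.tendsto.mono_left nhdsWithin_le_nhds
    rwa [h0] at h2
  have hid : Filter.Tendsto (fun x : ℝ => x) (nhdsWithin 1 (Set.Ioo m 1)) (nhds 1) :=
    (continuous_id.tendsto 1).mono_left nhdsWithin_le_nhds
  obtain ⟨r, ⟨hrm, hr1⟩, hp0, hur, hc3, hc4⟩ : ∃ r, r ∈ Set.Ioo m 1 ∧ 0 < p r ∧ u r ≤ r ∧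
      1 - p r * (r - u r) < ε ∧ (1 + u r) / p r - 1 < ε := by
    haveI := right_nhdsWithin_Ioo_neBot hm1
    have e1 : ∀ᶠ x in nhdsWithin 1 (Set.Ioo m 1), 0 < p x :=
      htp.eventually (eventually_gt_nhds one_pos)
    have e2 : ∀ᶠ x in nhdsWithin 1 (Set.Ioo m 1), u x ≤ x := by
      have t2 : Filter.Tendsto (fun x => x - u x) (nhdsWithin 1 (Set.Ioo m 1)) (nhds 1) := by
        simpa using hid.sub htu
      exact (t2.eventually (eventually_gt_nhds one_pos)).mono fun x hx => by linarith
    have e3 : ∀ᶠ x in nhdsWithin 1 (Set.Ioo m 1), 1 - p x * (x - u x) < ε := by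
      have t3 : Filter.Tendsto (fun x => 1 - p x * (x - u x))
          (nhdsWithin 1 (Set.Ioo m 1)) (nhds 0) := by
        have := Filter.Tendsto.sub (tendsto_const_nhds (x := (1:ℝ)))
          (htp.mul (hid.sub htu))
        simpa using this
      exact t3.eventually (eventually_lt_nhds hε)
    have e4 : ∀ᶠ x in nhdsWithin 1 (Set.Ioo m 1), (1 + u x) / p x - 1 < ε := by
      have t4 : Filter.Tendsto (fun x => (1 + u x) / p x - 1)
          (nhdsWithin 1 (Set.Ioo m 1)) (nhds 0) := by
        have := Filter.Tendsto.sub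
          (((tendsto_const_nhds (x := (1:ℝ))).add htu).div htp one_ne_zero)
          (tendsto_const_nhds (x := (1:ℝ)))
        simpa using this
      exact t4.eventually (eventually_lt_nhds hε)
    exact (((eventually_mem_nhdsWithin.and e1).and ((e2.and e3).and e4)).mono
      (fun x hx => ⟨hx.1.1, hx.1.2, hx.2.1.1, hx.2.1.2, hx.2.2⟩)).exists
  refine ⟨r, lt_of_le_of_lt hm0 hrm, hr1, ?_⟩
  intro w hrw hw1
  have hx0 : 0 < ‖w‖ := lt_trans (lt_of_le_of_lt hm0 hrm) hrw
  have hxm : m < ‖w‖ := lt_trans hrm hrw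
  -- basic nonvanishing facts
  have habs1m : ∀ k, 1 - m ≤ ‖1 - conj (z k) * w‖ := by
    intro k
    have h1 : ‖conj (z k) * w‖ ≤ m := by
      rw [norm_mul, Complex.norm_conj]
      calc ‖z k‖ * ‖w‖ ≤ m * 1 :=
        mul_le_mul (hmle k) (le_of_lt hw1) (norm_nonneg w) hm0
      _ = m := mul_one m
    have h2 := norm_add_le (1 - conj (z k) * w) (conj (z k) * w)
    simp only [sub_add_cancel, norm_one] at h2
    linarith
  have habszw : ∀ k, ‖w‖ - m ≤ ‖z k - w‖ := by
    intro k
    have h2 := norm_add_le (w - z k) (z k)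
    simp only [sub_add_cancel] at h2
    rw [norm_sub_rev (z k) w] at *
    linarith [hmle k]
  have hden : ∀ k, (1 : ℂ) - conj (z k) * w ≠ 0 := by
    intro k h
    have h2 := habs1m k
    rw [h] at h2
    simp at h2
    linarith
  have hden' : ∀ k, (1 : ℂ) - z k * conj w ≠ 0 := by
    intro k h
    apply hden k
    have := congrArg (starRingEnd ℂ) h
    simpa [map_sub, map_mul] using this
  have hzw : ∀ k, z k - w ≠ 0 := by
    intro k h
    have := habszw k
    rw [h] at this
    simp at this
    linarith
  set f : Fin n → ℂ → ℂ := fun k v => (z k - v) / (1 - conj (z k) * v) with hf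
  -- derivative of each factor
  have hfk : ∀ k, HasDerivAt (f k) ((conj (z k) * z k - 1) / (1 - conj (z k) * w) ^ 2) w := by
    intro k
    have h1 : HasDerivAt (fun v : ℂ => z k - v) (-1) w := by
      simpa using (hasDerivAt_id w).const_sub (z k)
    have h2 : HasDerivAt (fun v : ℂ => 1 - conj (z k) * v) (-(conj (z k))) w := by
      simpa using ((hasDerivAt_id w).const_mul (conj (z k))).const_sub 1
    have := h1.div h2 (hden k)
    refine this.congr_deriv ?_
    ring
  have hBd : HasDerivAt B
      (Complex.exp (α * Complex.I) *
        ∑ k, (∏ j ∈ Finset.univ.erase k, f j w) *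
          ((conj (z k) * z k - 1) / (1 - conj (z k) * w) ^ 2)) w := by
    rw [hB]
    have := (HasDerivAt.finset_prod (u := Finset.univ) (f := f)
      (f' := fun k => (conj (z k) * z k - 1) / (1 - conj (z k) * w) ^ 2)
      (fun k _ => hfk k)).const_mul (Complex.exp (α * Complex.I))
    simpa only [smul_eq_mul, Finset.prod_apply] using this
  -- per-term identity
  set ρ : Fin n → ℝ := fun k => (1 - ‖w‖ ^ 2) * (1 - ‖z k‖ ^ 2) /
      ‖1 - conj (z k) * w‖ ^ 2 with hρ
  have hterm : ∀ k, ((1 - ‖w‖ ^ 2 : ℝ) : ℂ) *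
      ((conj (z k) * z k - 1) / (1 - conj (z k) * w) ^ 2) =
      -(f k w) * (ρ k : ℝ) * ((1 - z k * conj w) / (z k - w)) := by
    intro k
    have c1 : ((‖w‖ ^ 2 : ℝ) : ℂ) = w * conj w := cast_sq_abs w
    have c2 : ((‖z k‖ ^ 2 : ℝ) : ℂ) = z k * conj (z k) := cast_sq_abs (z k)
    have c3 : ((‖1 - conj (z k) * w‖ ^ 2 : ℝ) : ℂ) =
        (1 - conj (z k) * w) * (1 - z k * conj w) := by
      rw [cast_sq_abs]
      simp [map_sub, map_mul]
    simp only [hρ, Complex.ofReal_div, Complex.ofReal_mul, Complex.ofReal_sub,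
      Complex.ofReal_one]
    rw [c1, c2, c3]
    rw [show f k w = (z k - w) / (1 - conj (z k) * w) from rfl]
    have e : (z k - w) * (z k - w)⁻¹ * ((1 - z k * conj w) * (1 - z k * conj w)⁻¹) = 1 := by
      rw [mul_inv_cancel₀ (hzw k), mul_inv_cancel₀ (hden' k), one_mul]
    generalize z k - w = E at e ⊢
    generalize 1 - z k * conj w = D' at e ⊢
    generalize 1 - conj (z k) * w = D at e ⊢
    linear_combination ((1 - w * conj w) * (1 - z k * conj (z k)) / D ^ 2) * e
  -- key identity
  have key : ((1 - ‖w‖ ^ 2 : ℝ) : ℂ) * deriv B w =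
      -(B w) * ∑ k, (ρ k : ℂ) * ((1 - z k * conj w) / (z k - w)) := by
    have hBw : B w = Complex.exp (α * Complex.I) * ∏ j, f j w := by rw [hB]
    rw [hBd.deriv, hBw]
    simp only [Finset.mul_sum, neg_mul, ← Finset.sum_neg_distrib]
    refine Finset.sum_congr rfl fun k _ => ?_
    have h2 : (∏ j ∈ Finset.univ.erase k, f j w) * f k w = ∏ j, f j w :=
      Finset.prod_erase_mul _ _ (Finset.mem_univ k)
    calc ((1 - ‖w‖ ^ 2 : ℝ) : ℂ) *
          (Complex.exp (α * Complex.I) * ((∏ j ∈ Finset.univ.erase k, f j w) *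
            ((conj (z k) * z k - 1) / (1 - conj (z k) * w) ^ 2)))
        = Complex.exp (α * Complex.I) * (∏ j ∈ Finset.univ.erase k, f j w) *
          (((1 - ‖w‖ ^ 2 : ℝ) : ℂ) *
            ((conj (z k) * z k - 1) / (1 - conj (z k) * w) ^ 2)) := by ring
      _ = Complex.exp (α * Complex.I) * (∏ j ∈ Finset.univ.erase k, f j w) *
          (-(f k w) * (ρ k : ℝ) * ((1 - z k * conj w) / (z k - w))) := by rw [hterm k]
      _ = -(Complex.exp (α * Complex.I) * ((∏ j ∈ Finset.univ.erase k, f j w) * f k w) *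
          ((ρ k : ℝ) * ((1 - z k * conj w) / (z k - w)))) := by ring
      _ = -(Complex.exp (α * Complex.I) * (∏ j, f j w) *
          ((ρ k : ℝ) * ((1 - z k * conj w) / (z k - w)))) := by rw [h2]
  -- real estimates
  have hx1sq : 0 < 1 - ‖w‖ ^ 2 := by nlinarith
  have hρpos : ∀ k, 0 < ρ k := by
    intro k
    apply div_pos
    · apply mul_pos hx1sq
      nlinarith [hz k, norm_nonneg (z k)]
    · have := habs1m k
      nlinarith
  have h1m : (0:ℝ) < 1 - m := by linarith
  have hρle : ∀ k, ρ k ≤ (1 - ‖w‖ ^ 2) / (1 - m) ^ 2 := by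
    intro k
    have hz1 : 1 - ‖z k‖ ^ 2 ≤ 1 := by
      nlinarith [sq_nonneg (‖z k‖)]
    have hnum2 : (1 - ‖w‖ ^ 2) * (1 - ‖z k‖ ^ 2) ≤
        1 - ‖w‖ ^ 2 := mul_le_of_le_one_right hx1sq.le hz1
    have hden2 : (1 - m) ^ 2 ≤ ‖1 - conj (z k) * w‖ ^ 2 :=
      pow_le_pow_left₀ h1m.le (habs1m k) 2
    exact div_le_div₀ hx1sq.le hnum2 (pow_pos h1m 2) hden2
  -- the squared-modulus identity
  have hXid : ∀ k, ‖1 - conj (z k) * w‖ ^ 2 - ‖z k - w‖ ^ 2 =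
      (1 - ‖w‖ ^ 2) * (1 - ‖z k‖ ^ 2) := by
    intro k
    rw [← Complex.ofReal_inj]
    simp only [Complex.ofReal_sub, Complex.ofReal_mul, Complex.ofReal_one]
    rw [cast_sq_abs, cast_sq_abs, cast_sq_abs, cast_sq_abs]
    simp only [map_sub, map_mul, map_one, Complex.conj_conj]
    ring
  have hsq : ∀ k, ‖f k w‖ ^ 2 = 1 - ρ k := by
    intro k
    have hD0 : (0 : ℝ) < ‖1 - conj (z k) * w‖ ^ 2 := by nlinarith [habs1m k]
    have hfab : ‖f k w‖ = ‖z k - w‖ / ‖1 - conj (z k) * w‖ := by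
      rw [show f k w = (z k - w) / (1 - conj (z k) * w) from rfl, norm_div]
    rw [hfab, div_pow, hρ]
    beta_reduce
    rw [eq_sub_iff_add_eq, ← add_div, div_eq_one_iff_eq hD0.ne']
    linarith [hXid k]
  have hs0 : ∀ k, 0 < ‖f k w‖ := by
    intro k
    exact norm_pos_iff.2 (div_ne_zero (hzw k) (hden k))
  have hs1 : ∀ k, ‖f k w‖ ≤ 1 := by
    intro k
    nlinarith [hsq k, hρpos k, (hs0 k).le]
  have hρlt1 : ∀ k, ρ k < 1 := by
    intro k
    nlinarith [hsq k, hs0 k]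
  have h1s : ∀ k, 1 - ‖f k w‖ ≤ ρ k := by
    intro k
    nlinarith [hsq k, hs0 k, hs1 k]
  set S : ℝ := ∑ k, ρ k with hSdef
  have hS0 : 0 < S := Finset.sum_pos (fun k _ => hρpos k) Finset.univ_nonempty
  have hSle : S ≤ n * (1 - ‖w‖ ^ 2) / (1 - m) ^ 2 := by
    calc S ≤ ∑ _k : Fin n, (1 - ‖w‖ ^ 2) / (1 - m) ^ 2 :=
        Finset.sum_le_sum fun k _ => hρle k
      _ = n * ((1 - ‖w‖ ^ 2) / (1 - m) ^ 2) := by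
        rw [Finset.sum_const, Finset.card_univ, Fintype.card_fin, nsmul_eq_mul]
      _ = n * (1 - ‖w‖ ^ 2) / (1 - m) ^ 2 := by ring
  set P : ℝ := ∏ k, ‖f k w‖ with hPdef
  have hP0 : 0 < P := Finset.prod_pos fun k _ => hs0 k
  have hP1 : P ≤ 1 := Finset.prod_le_one (fun k _ => (hs0 k).le) (fun k _ => hs1 k)
  have hBwabs : ‖B w‖ = P := by
    rw [hB]
    simp only [norm_mul, Complex.norm_exp]
    rw [norm_prod]
    simp [hPdef, hf]
  have hP2 : P ^ 2 = ∏ k, (1 - ρ k) := by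
    rw [hPdef, ← Finset.prod_pow]
    exact Finset.prod_congr rfl fun k _ => hsq k
  have hDleS : 1 - ‖B w‖ ^ 2 ≤ S := by
    rw [hBwabs, hP2]
    have := aux_A Finset.univ (fun k => 1 - ρ k) (fun k _ => sub_nonneg.2 (hρlt1 k).le)
      (fun k _ => sub_le_self 1 (hρpos k).le)
    simpa using this
  have hDge : P ^ 2 * S ≤ 1 - ‖B w‖ ^ 2 := by
    rw [hBwabs, hP2]
    have := aux_B Finset.univ (fun k => 1 - ρ k) (fun k _ => sub_nonneg.2 (hρlt1 k).le)
      (fun k _ => sub_le_self 1 (hρpos k).le)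
    simpa using this
  have hD0 : 0 < 1 - ‖B w‖ ^ 2 :=
    lt_of_lt_of_le (mul_pos (pow_pos hP0 2) hS0) hDge
  have h1P : 1 - P ≤ S := by
    have hA := aux_A Finset.univ (fun k => ‖f k w‖) (fun k _ => (hs0 k).le)
      (fun k _ => hs1 k)
    have hB2 : ∑ k, (1 - ‖f k w‖) ≤ S := Finset.sum_le_sum fun k _ => h1s k
    exact le_trans hA hB2
  have hPge : p r ≤ P := by
    have h1 : n * (1 - ‖w‖ ^ 2) / (1 - m) ^ 2 ≤ n * (1 - r ^ 2) / (1 - m) ^ 2 := by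
      gcongr
      nlinarith
    have : 1 - P ≤ n * (1 - r ^ 2) / (1 - m) ^ 2 := by linarith
    simp only [hp]
    linarith
  -- numerator estimates
  set E : ℂ := ∑ k, (ρ k : ℂ) * (((1 - ‖w‖ ^ 2 : ℝ) : ℂ) / (z k - w)) with hE
  have hcw : ((1 - ‖w‖ ^ 2 : ℝ) : ℂ) = 1 - w * conj w := by
    rw [Complex.ofReal_sub, Complex.ofReal_one, cast_sq_abs]
  have hgk : ∀ k, (1 - z k * conj w) / (z k - w) =
      -conj w + ((1 - ‖w‖ ^ 2 : ℝ) : ℂ) / (z k - w) := by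
    intro k
    rw [hcw]
    field_simp [hzw k]
    ring
  have hsum : (∑ k, (ρ k : ℂ) * ((1 - z k * conj w) / (z k - w))) =
      -conj w * (S : ℂ) + E := by
    simp only [hgk, mul_add, Finset.sum_add_distrib]
    rw [hE]
    congr 1
    rw [hSdef]
    push_cast
    rw [← Finset.sum_mul]
    ring
  have hβ : ∀ k, ‖(ρ k : ℂ) * (((1 - ‖w‖ ^ 2 : ℝ) : ℂ) / (z k - w))‖ ≤
      ρ k * ((1 - ‖w‖ ^ 2) / (‖w‖ - m)) := by
    intro k
    rw [norm_mul, norm_div, Complex.norm_real, Real.norm_eq_abs, Complex.norm_real, Real.norm_eq_abs,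
      _root_.abs_of_nonneg (hρpos k).le, _root_.abs_of_nonneg hx1sq.le]
    apply mul_le_mul_of_nonneg_left _ (hρpos k).le
    apply div_le_div₀ hx1sq.le le_rfl (by linarith) (habszw k)
  have hEle : ‖E‖ ≤ S * ((1 - ‖w‖ ^ 2) / (‖w‖ - m)) := by
    rw [hE]
    calc ‖∑ k, (ρ k : ℂ) * (((1 - ‖w‖ ^ 2 : ℝ) : ℂ) / (z k - w))‖
        ≤ ∑ k, ‖(ρ k : ℂ) * (((1 - ‖w‖ ^ 2 : ℝ) : ℂ) / (z k - w))‖ :=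
          norm_sum_le _ _
      _ ≤ ∑ k, ρ k * ((1 - ‖w‖ ^ 2) / (‖w‖ - m)) :=
          Finset.sum_le_sum fun k _ => hβ k
      _ = S * ((1 - ‖w‖ ^ 2) / (‖w‖ - m)) := by
          rw [hSdef, ← Finset.sum_mul]
  have habsmain : ‖-conj w * (S : ℂ)‖ = ‖w‖ * S := by
    rw [norm_mul, norm_neg, Complex.norm_conj, Complex.norm_real, Real.norm_eq_abs, _root_.abs_of_nonneg hS0.le]
  set β : ℝ := (1 - ‖w‖ ^ 2) / (‖w‖ - m) with hβdef
  have hSup : ‖∑ k, (ρ k : ℂ) * ((1 - z k * conj w) / (z k - w))‖ ≤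
      ‖w‖ * S + S * β := by
    rw [hsum]
    calc ‖-conj w * (S : ℂ) + E‖ ≤
        ‖-conj w * (S : ℂ)‖ + ‖E‖ := norm_add_le _ _
      _ ≤ ‖w‖ * S + S * β := by rw [habsmain]; exact add_le_add_right hEle _
  have hSlo : ‖w‖ * S - S * β ≤
      ‖∑ k, (ρ k : ℂ) * ((1 - z k * conj w) / (z k - w))‖ := by
    rw [hsum]
    have h := norm_add_le (-conj w * (S : ℂ) + E) (-E)
    simp only [add_neg_cancel_right] at h
    rw [habsmain, norm_neg] at h
    linarith [hEle]
  have hnum : (1 - ‖w‖ ^ 2) * ‖deriv B w‖ =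
      P * ‖∑ k, (ρ k : ℂ) * ((1 - z k * conj w) / (z k - w))‖ := by
    have := congrArg (‖·‖) key
    rw [norm_mul, norm_mul, Complex.norm_real, Real.norm_eq_abs, _root_.abs_of_nonneg hx1sq.le, norm_neg,
      hBwabs] at this
    exact this
  -- conclude
  have hr0 : 0 < r := lt_of_le_of_lt hm0 hrm
  have hβ0 : 0 ≤ β := div_nonneg hx1sq.le (by linarith)
  have hur' : u r = (1 - r ^ 2) / (r - m) := by simp [hu]
  have hβle : β ≤ u r := by
    rw [hβdef, hur']
    apply div_le_div₀ (by nlinarith) (by nlinarith) (by linarith) (by linarith)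
  have hQup : ‖deriv B w‖ * (1 - ‖w‖ ^ 2) /
      (1 - ‖B w‖ ^ 2) ≤ (1 + u r) / p r := by
    have step1 : ‖deriv B w‖ * (1 - ‖w‖ ^ 2) /
        (1 - ‖B w‖ ^ 2) ≤ (P * (‖w‖ * S + S * β)) / (P ^ 2 * S) := by
      apply div_le_div₀
        (mul_nonneg hP0.le (add_nonneg (mul_nonneg hx0.le hS0.le) (mul_nonneg hS0.le hβ0)))
      · rw [mul_comm, hnum]
        exact mul_le_mul_of_nonneg_left hSup hP0.le
      · exact mul_pos (pow_pos hP0 2) hS0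
      · exact hDge
    have step2 : (P * (‖w‖ * S + S * β)) / (P ^ 2 * S) =
        (‖w‖ + β) / P := by
      field_simp [hP0.ne', hS0.ne']
    have step3 : (‖w‖ + β) / P ≤ (1 + u r) / p r := by
      apply div_le_div₀ _ (by linarith) hp0 hPge
      have : 0 ≤ u r := le_trans hβ0 hβle
      linarith
    calc ‖deriv B w‖ * (1 - ‖w‖ ^ 2) / (1 - ‖B w‖ ^ 2)
        ≤ (P * (‖w‖ * S + S * β)) / (P ^ 2 * S) := step1
      _ = (‖w‖ + β) / P := step2
      _ ≤ (1 + u r) / p r := step3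
  have hQlo : p r * (r - u r) ≤ ‖deriv B w‖ * (1 - ‖w‖ ^ 2) /
      (1 - ‖B w‖ ^ 2) := by
    have step1 : p r * (r - u r) ≤ P * (‖w‖ - β) := by
      apply mul_le_mul hPge (by linarith) (by linarith) hP0.le
    have step2 : P * (‖w‖ - β) ≤ ‖deriv B w‖ * (1 - ‖w‖ ^ 2) /
        (1 - ‖B w‖ ^ 2) := by
      have h1 : P * (‖w‖ - β) = (P * (‖w‖ * S - S * β)) / S := by
        field_simp [hS0.ne']
      rw [h1]
      apply div_le_div₀ _ _ hD0 hDleS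
      · rw [mul_comm (‖deriv B w‖) _, hnum]
        exact mul_nonneg hP0.le (norm_nonneg _)
      · rw [mul_comm (‖deriv B w‖) _, hnum]
        exact mul_le_mul_of_nonneg_left hSlo hP0.le
    exact le_trans step1 step2
  rw [abs_lt]
  constructor
  · have h5 : (1:ℝ) - ε < p r * (r - u r) := by linarith only [hc3]
    have h6 := lt_of_lt_of_le h5 hQlo
    linarith only [h6]
  · linarith only [hQup, hc4, hε]
end

section
/- Let B be a finite Blaschke product and let w ∈ ℂ with w ≠ 0, w not a pole of B, and B(w) ≠ 0 (so that 1/conj(w) is also neither a zero nor a pole of B). Then B'(w) = 0 if and only if B'(1/conj(w)) = 0. -/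
open Complex ComplexConjugate

private lemma blaschke_factor_hasDerivAt (c z x : ℂ) (hd : 1 - c * x ≠ 0) :
    HasDerivAt (fun ζ => (z - ζ) / (1 - c * ζ)) ((c * z - 1) / (1 - c * x) ^ 2) x := by
  have h1 : HasDerivAt (fun ζ : ℂ => z - ζ) (-1) x := by
    simpa using (hasDerivAt_id x).const_sub z
  have h2 : HasDerivAt (fun ζ : ℂ => 1 - c * ζ) (-c) x := by
    simpa using ((hasDerivAt_id x).const_mul c).const_sub 1
  have := h1.div h2 hd
  refine this.congr_deriv ?_
  ring

private lemma blaschke_deriv_key (n : ℕ) (z : Fin n → ℂ) (x : ℂ)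
    (hd : ∀ k, 1 - conj (z k) * x ≠ 0) (hn : ∀ k, z k - x ≠ 0) :
    HasDerivAt (fun ζ => ∏ k, (z k - ζ) / (1 - conj (z k) * ζ))
      ((∏ k, (z k - x) / (1 - conj (z k) * x)) *
        ∑ k, (conj (z k) * z k - 1) / ((z k - x) * (1 - conj (z k) * x))) x := by
  have h := HasDerivAt.fun_finsetProd (u := Finset.univ)
    (f := fun k ζ => (z k - ζ) / (1 - conj (z k) * ζ))
    (f' := fun k => (conj (z k) * z k - 1) / (1 - conj (z k) * x) ^ 2)
    (fun k _ => blaschke_factor_hasDerivAt (conj (z k)) (z k) x (hd k))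
  refine h.congr_deriv ?_
  symm
  rw [Finset.mul_sum]
  refine Finset.sum_congr rfl fun k _ => ?_
  have hk : (z k - x) / (1 - conj (z k) * x) *
      ((conj (z k) * z k - 1) / ((z k - x) * (1 - conj (z k) * x)))
      = (conj (z k) * z k - 1) / (1 - conj (z k) * x) ^ 2 := by
    rw [div_mul_div_comm, pow_two, div_eq_div_iff (by exact mul_ne_zero (hd k) (mul_ne_zero (hn k) (hd k))) (by exact mul_ne_zero (hd k) (hd k))]
    ring
  rw [smul_eq_mul, ← Finset.prod_erase_mul Finset.univ _ (Finset.mem_univ k), mul_assoc, hk]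

/-- Let `B` be a finite Blaschke product and let `w ∈ ℂ` with `w ≠ 0`, `w` not a pole of
`B`, and `B(w) ≠ 0`.  Then `B'(w) = 0` if and only if `B'(1/conj(w)) = 0`. -/
theorem blaschke_deriv_symmetric_zeros (n : ℕ) (α : ℝ) (z : Fin n → ℂ)
    (hz : ∀ k, ‖z k‖ < 1) (B : ℂ → ℂ)
    (hB : B = fun ζ => Complex.exp (α * Complex.I) * ∏ k, (z k - ζ) / (1 - conj (z k) * ζ))
    (w : ℂ) (hw0 : w ≠ 0) (hwpole : ∀ k, 1 - conj (z k) * w ≠ 0) (hwzero : B w ≠ 0) :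
    deriv B w = 0 ↔ deriv B (conj w)⁻¹ = 0 := by
  have hcw : conj w ≠ 0 := by simpa using hw0
  set v : ℂ := (conj w)⁻¹ with hv
  have hnw : ∀ k, z k - w ≠ 0 := by
    intro k hk
    apply hwzero
    rw [hB]
    simp only
    rw [Finset.prod_eq_zero (Finset.mem_univ k) (by rw [hk]; simp)]
    simp
  have hdv : ∀ k, 1 - conj (z k) * v ≠ 0 := by
    intro k h
    apply hnw k
    have hcz : conj (z k) = conj w := by
      have h3 : v * conj w = 1 := by rw [hv, inv_mul_cancel₀ hcw]
      linear_combination (-(conj w)) * h + (-(conj (z k))) * h3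
    have : z k = w := (starRingEnd ℂ).injective hcz
    rw [this, sub_self]
  have hnv : ∀ k, z k - v ≠ 0 := by
    intro k h
    apply hwpole k
    rw [sub_eq_zero] at h
    have h2 : z k * conj w = 1 := by rw [h, hv, inv_mul_cancel₀ hcw]
    have := congrArg conj h2
    simp only [map_mul, Complex.conj_conj, map_one] at this
    linear_combination -this
  set S : ℂ → ℂ := fun x => ∑ k, (conj (z k) * z k - 1) / ((z k - x) * (1 - conj (z k) * x))
    with hS
  have hderiv : ∀ x : ℂ, (∀ k, 1 - conj (z k) * x ≠ 0) → (∀ k, z k - x ≠ 0) →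
      deriv B x = B x * S x := by
    intro x hd hn
    have h := (blaschke_deriv_key n z x hd hn).const_mul (Complex.exp (α * Complex.I))
    rw [hB]
    rw [h.deriv]
    simp only [hS]
    ring
  have hBv : B v ≠ 0 := by
    rw [hB]
    simp only
    exact mul_ne_zero (Complex.exp_ne_zero _)
      (Finset.prod_ne_zero_iff.2 fun k _ => div_ne_zero (hnv k) (hdv k))
  have hew : deriv B w = B w * S w := hderiv w hwpole hnw
  have hev : deriv B v = B v * S v := hderiv v hdv hnv
  have hsym : S v = (conj w) ^ 2 * conj (S w) := by
    simp only [hS, map_sum, Finset.mul_sum]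
    refine Finset.sum_congr rfl fun k _ => ?_
    have h1 : conj (z k) - conj w ≠ 0 :=
      sub_ne_zero.2 fun h => hnw k (sub_eq_zero.2 ((starRingEnd ℂ).injective h))
    have h2 : 1 - z k * conj w ≠ 0 := by
      intro h
      apply hwpole k
      have := congrArg conj h
      simpa [map_sub, map_mul] using this
    have A : z k - (conj w)⁻¹ ≠ 0 := hv ▸ hnv k
    have Bd : 1 - conj (z k) * (conj w)⁻¹ ≠ 0 := hv ▸ hdv k
    simp only [map_div₀, map_mul, map_sub, map_one, Complex.conj_conj, hv]
    rw [mul_div_assoc', div_eq_div_iff (mul_ne_zero A Bd) (mul_ne_zero h1 h2)]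
    field_simp
    ring
  rw [hew, hev]
  rw [mul_eq_zero, mul_eq_zero]
  simp only [hwzero, hBv, false_or]
  rw [hsym, mul_eq_zero]
  constructor
  · intro h
    right
    simpa using congrArg conj h
  · rintro (h | h)
    · exact absurd h (pow_ne_zero 2 hcw)
    · simpa using congrArg conj h
end
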